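/- arXiv:2311.07433 — 6 statements merged into one kernel-verified Lean document; each statement's English description precedes it below -/
import Mathlib

section
/- There exists a constant C > 0 with the following property: for all lattice points r̃, ṽ ∈ 2πℤ³ with |r̃| ≥ 2π and |ṽ| ≥ 2π, and for all r, v ∈ ℝ³ with r in the cube r̃ + [−π, π]³ and v in the cube ṽ + [−π, π]³, one has | 1/((|r|² + |v|² + r·v) |r|² |v|²) − 1/((|r̃|² + |ṽ|² + r̃·ṽ) |r̃|² |ṽ|²) | ≤ C · (1/|r| + 1/|v|) / ((|r|² + |v|²) |r|² |v|²). -/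
open scoped RealInnerProductSpace
open Real MeasureTheory

/-- The momentum lattice point `2πk ∈ Λ* = 2πℤ³`, viewed as an element of `ℝ³`. -/
noncomputable def lat (k : Fin 3 → ℤ) : EuclideanSpace ℝ (Fin 3) :=
  WithLp.toLp 2 (fun i => 2 * Real.pi * (k i))

set_option maxHeartbeats 1000000 in
private lemma sq_diff_bound (x y : ℝ) (hx : 0 < x) (hy0 : 0 < y)
    (h : |x - y| ≤ 7) (hy : y ≤ 11 * x) :
    |x^2 - y^2| ≤ 84 * x := by
  obtain ⟨h1, h2⟩ := abs_le.mp h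
  have ht : 0 ≤ x + y := by linarith
  rw [abs_le]
  constructor <;>
    nlinarith [mul_nonneg (by linarith : (0:ℝ) ≤ 7 - (x - y)) ht,
      mul_nonneg (by linarith : (0:ℝ) ≤ (x - y) + 7) ht]

set_option maxHeartbeats 1000000 in
private lemma prod_diff_bound (a b u w : ℝ) (ha : 0 < a) (hb : 0 < b) (hu : 0 ≤ u)
    (d1 : |a^2 - u^2| ≤ 84 * a) (d2 : |b^2 - w^2| ≤ 84 * b) (hu21 : u^2 ≤ 121 * a^2) :
    |a^2 * b^2 - u^2 * w^2| ≤ 10164 * (a * b * (a + b)) := by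
  obtain ⟨d11, d12⟩ := abs_le.mp d1
  obtain ⟨d21, d22⟩ := abs_le.mp d2
  rw [abs_le]
  constructor <;>
    nlinarith [mul_le_mul_of_nonneg_right d12 (sq_nonneg b),
      mul_le_mul_of_nonneg_right d11 (sq_nonneg b),
      mul_le_mul_of_nonneg_left d22 (sq_nonneg u),
      mul_le_mul_of_nonneg_left d21 (sq_nonneg u),
      mul_le_mul_of_nonneg_right hu21 (by positivity : (0:ℝ) ≤ 84 * b),
      sq_nonneg u, sq_nonneg b, mul_pos ha hb]

set_option maxHeartbeats 1000000 in
private lemma combine_bound (a b : ℝ) (ha : 0 < a) (hb : 0 < b) :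
    (161 * (a + b)) * (a^2 * b^2) + (242 * (a^2 + b^2)) * (10164 * (a * b * (a + b)))
      ≤ 2500000 * ((a^2 + b^2) * (a*b) * (a+b)) := by
  nlinarith [mul_le_mul_of_nonneg_right
    (by nlinarith [sq_nonneg (a-b)] : a*b ≤ a^2 + b^2)
    (by positivity : (0:ℝ) ≤ a*b*(a+b)),
    mul_nonneg (mul_nonneg (by positivity : (0:ℝ) ≤ a^2+b^2) (by positivity : (0:ℝ) ≤ a*b))
      (by positivity : (0:ℝ) ≤ a+b)]

set_option maxHeartbeats 1000000 in
private lemma final_step (a b D E : ℝ) (ha : 0 < a) (hb : 0 < b)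
    (hD : (a^2 + b^2) * a^2 * b^2 / 2 ≤ D) (hE : (a^2 + b^2) * a^2 * b^2 / 250 ≤ E)
    (hED : |E - D| ≤ 2500000 * ((a^2 + b^2) * (a*b) * (a+b))) :
    |E - D| * ((a^2 + b^2) * a^3 * b^3) ≤ 10^10 * (a + b) * (D * E) := by
  have h0 : (0:ℝ) < (a^2 + b^2) * a^2 * b^2 / 250 := by positivity
  have hprod : ((a^2+b^2) * a^2 * b^2 / 2) * ((a^2+b^2) * a^2 * b^2 / 250) ≤ D * E :=
    mul_le_mul hD hE (le_of_lt h0) (le_trans (by positivity) hD)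
  calc |E - D| * ((a^2 + b^2) * a^3 * b^3)
      ≤ (2500000 * ((a^2 + b^2) * (a*b) * (a+b))) * ((a^2 + b^2) * a^3 * b^3) := by
        gcongr
    _ = (2500000 * 500) * ((a+b) * (((a^2+b^2) * a^2 * b^2 / 2) * ((a^2+b^2) * a^2 * b^2 / 250))) := by
        ring
    _ ≤ (2500000 * 500) * ((a+b) * (D * E)) := by
        gcongr
    _ ≤ 10^10 * (a + b) * (D * E) := by
        have h1 : 0 ≤ (a+b) * (D * E) := by
          have : (0:ℝ) < D * E := lt_of_lt_of_le (by positivity) hprod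
          positivity
        nlinarith [h1]

set_option maxHeartbeats 1000000 in
private lemma scalar_key (a b u w p q : ℝ)
    (ha : 3/4 ≤ a) (hb : 3/4 ≤ b) (hu : 6 ≤ u) (hw : 6 ≤ w)
    (hau : |a - u| ≤ 7) (hbw : |b - w| ≤ 7)
    (hp : |p| ≤ a * b) (hq : |q| ≤ u * w)
    (hpq : |p - q| ≤ 7 * (b + u)) :
    |1 / ((a^2 + b^2 + p) * a^2 * b^2) - 1 / ((u^2 + w^2 + q) * u^2 * w^2)|
      ≤ 10^10 * (1 / a + 1 / b) / ((a^2 + b^2) * a^2 * b^2) := by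
  obtain ⟨hau1, hau2⟩ := abs_le.mp hau
  obtain ⟨hbw1, hbw2⟩ := abs_le.mp hbw
  obtain ⟨hp1, hp2⟩ := abs_le.mp hp
  obtain ⟨hq1, hq2⟩ := abs_le.mp hq
  obtain ⟨hpq1, hpq2⟩ := abs_le.mp hpq
  have ha0 : (0:ℝ) < a := by linarith
  have hb0 : (0:ℝ) < b := by linarith
  have hu0 : (0:ℝ) < u := by linarith
  have hw0 : (0:ℝ) < w := by linarith
  have hu11 : u ≤ 11 * a := by linarith
  have hw11 : w ≤ 11 * b := by linarith
  have hu6 : 6 * a ≤ 13 * u := by linarith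
  have hw6 : 6 * b ≤ 13 * w := by linarith
  have hu2 : a^2 / 5 ≤ u^2 := by nlinarith [mul_le_mul hu6 hu6 (by linarith) (by linarith)]
  have hw2 : b^2 / 5 ≤ w^2 := by nlinarith [mul_le_mul hw6 hw6 (by linarith) (by linarith)]
  have hu21 : u^2 ≤ 121 * a^2 := by nlinarith [mul_le_mul hu11 hu11 (by linarith) (by linarith)]
  have hw21 : w^2 ≤ 121 * b^2 := by nlinarith [mul_le_mul hw11 hw11 (by linarith) (by linarith)]
  have habe : 2 * (a * b) ≤ a^2 + b^2 := by nlinarith [sq_nonneg (a - b)]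
  have huwe : 2 * (u * w) ≤ u^2 + w^2 := by nlinarith [sq_nonneg (u - w)]
  set A := a^2 + b^2 + p with hA
  set B := u^2 + w^2 + q with hB
  have hAlow : (a^2 + b^2)/2 ≤ A := by rw [hA]; linarith
  have hBlow : (u^2 + w^2)/2 ≤ B := by rw [hB]; linarith
  have hBup : B ≤ 2 * (u^2 + w^2) := by rw [hB]; linarith
  set D := A * a^2 * b^2 with hD
  set E := B * u^2 * w^2 with hE
  have hA0 : (0:ℝ) < A := lt_of_lt_of_le (by positivity) hAlow
  have hB0 : (0:ℝ) < B := lt_of_lt_of_le (by positivity) hBlow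
  have hD0 : (0:ℝ) < D := by rw [hD]; positivity
  have hE0 : (0:ℝ) < E := by rw [hE]; positivity
  have hDlow : (a^2 + b^2) * a^2 * b^2 / 2 ≤ D := by
    calc (a^2 + b^2) * a^2 * b^2 / 2 = ((a^2+b^2)/2) * a^2 * b^2 := by ring
    _ ≤ A * a^2 * b^2 := by gcongr
  have hElow : (a^2 + b^2) * a^2 * b^2 / 250 ≤ E := by
    have hB10 : (a^2 + b^2)/10 ≤ B := by linarith
    have step1 : ((a^2+b^2)/10) * (a^2/5) * (b^2/5) ≤ B * u^2 * w^2 := by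
      apply mul_le_mul _ hw2 (by positivity) (by positivity)
      apply mul_le_mul hB10 hu2 (by positivity) (le_of_lt hB0)
    calc (a^2 + b^2) * a^2 * b^2 / 250 = ((a^2+b^2)/10) * (a^2/5) * (b^2/5) := by ring
    _ ≤ E := step1
  have d1 : |a^2 - u^2| ≤ 84 * a := sq_diff_bound a u ha0 hu0 hau hu11
  have d2 : |b^2 - w^2| ≤ 84 * b := sq_diff_bound b w hb0 hw0 hbw hw11
  obtain ⟨d11, d12⟩ := abs_le.mp d1
  obtain ⟨d21, d22⟩ := abs_le.mp d2
  have hAd : |A - B| ≤ 161 * (a + b) := by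
    rw [hA, hB, abs_le]; constructor <;> linarith
  have hMd : |a^2 * b^2 - u^2 * w^2| ≤ 10164 * (a * b * (a + b)) :=
    prod_diff_bound a b u w ha0 hb0 (le_of_lt hu0) d1 d2 hu21
  have hBup' : |B| ≤ 242 * (a^2 + b^2) := by
    rw [abs_of_pos hB0]; linarith
  have hdiff : |D - E| ≤ 2500000 * ((a^2 + b^2) * (a*b) * (a+b)) := by
    have step : D - E = (A - B) * (a^2 * b^2) + B * (a^2*b^2 - u^2*w^2) := by
      rw [hD, hE]; ring
    calc |D - E| = |(A - B) * (a^2 * b^2) + B * (a^2*b^2 - u^2*w^2)| := by rw [step]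
    _ ≤ |(A - B) * (a^2 * b^2)| + |B * (a^2*b^2 - u^2*w^2)| := abs_add_le _ _
    _ = |A - B| * (a^2 * b^2) + |B| * |a^2*b^2 - u^2*w^2| := by
        rw [abs_mul (A - B), abs_mul B, abs_of_nonneg (by positivity : (0:ℝ) ≤ a^2*b^2)]
    _ ≤ (161 * (a + b)) * (a^2 * b^2) + (242 * (a^2 + b^2)) * (10164 * (a * b * (a + b))) := by
        gcongr <;> positivity
    _ ≤ 2500000 * ((a^2 + b^2) * (a*b) * (a+b)) := combine_bound a b ha0 hb0
  have hrhs : (10:ℝ)^10 * (1 / a + 1 / b) / ((a^2 + b^2) * a^2 * b^2)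
      = 10^10 * (a + b) / ((a^2 + b^2) * a^3 * b^3) := by
    field_simp; ring
  rw [hrhs, div_sub_div _ _ hD0.ne' hE0.ne', one_mul, mul_one, abs_div,
    abs_of_pos (mul_pos hD0 hE0), div_le_div_iff₀ (mul_pos hD0 hE0) (by positivity)]
  have hED : |E - D| ≤ 2500000 * ((a^2 + b^2) * (a*b) * (a+b)) := by
    rw [abs_sub_comm]; exact hdiff
  exact final_step a b D E ha0 hb0 hDlow hElow hED

private lemma cube_dist (x y : EuclideanSpace ℝ (Fin 3)) (h : ∀ i, |x i - y i| ≤ Real.pi) :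
    ‖x - y‖ ≤ 7 * Real.pi / 4 := by
  have hπ := Real.pi_pos
  have key : ∑ i, ‖(x - y) i‖ ^ 2 ≤ (7 * Real.pi / 4) ^ 2 := by
    have hb : ∀ i : Fin 3, ‖(x - y) i‖ ^ 2 ≤ Real.pi ^ 2 := by
      intro i
      have hxy : (x - y) i = x i - y i := rfl
      rw [hxy, Real.norm_eq_abs]
      exact pow_le_pow_left₀ (abs_nonneg _) (h i) 2
    calc ∑ i, ‖(x - y) i‖ ^ 2 ≤ ∑ _i : Fin 3, Real.pi ^ 2 :=
          Finset.sum_le_sum (fun i _ => hb i)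
    _ = 3 * Real.pi ^ 2 := by simp [Finset.sum_const, Finset.card_univ]
    _ ≤ (7 * Real.pi / 4) ^ 2 := by nlinarith [sq_nonneg Real.pi]
  rw [EuclideanSpace.norm_eq]
  calc Real.sqrt (∑ i, ‖(x - y) i‖ ^ 2) ≤ Real.sqrt ((7 * Real.pi / 4) ^ 2) :=
        Real.sqrt_le_sqrt key
  _ = 7 * Real.pi / 4 := Real.sqrt_sq (by positivity)

/-- There exists `C > 0` such that for all lattice points
`r̃, ṽ ∈ 2πℤ³` with `|r̃| ≥ 2π`, `|ṽ| ≥ 2π`, and all `r, v ∈ ℝ³` in the cubes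
`r̃ + [−π,π]³` and `ṽ + [−π,π]³` respectively, the difference of the kernel
`1/((|r|² + |v|² + r·v)|r|²|v|²)` at `(r,v)` and at `(r̃,ṽ)` is bounded by
`C·(1/|r| + 1/|v|)/((|r|² + |v|²)|r|²|v|²)`. -/
theorem kernel_pointwise_lattice_comparison :
    ∃ C > 0, ∀ rt vt : Fin 3 → ℤ, ∀ r v : EuclideanSpace ℝ (Fin 3),
      2 * Real.pi ≤ ‖lat rt‖ → 2 * Real.pi ≤ ‖lat vt‖ →
      (∀ i : Fin 3, |r i - lat rt i| ≤ Real.pi) →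
      (∀ i : Fin 3, |v i - lat vt i| ≤ Real.pi) →
      |1 / ((‖r‖ ^ 2 + ‖v‖ ^ 2 + ⟪r, v⟫) * ‖r‖ ^ 2 * ‖v‖ ^ 2)
          - 1 / ((‖lat rt‖ ^ 2 + ‖lat vt‖ ^ 2 + ⟪lat rt, lat vt⟫)
              * ‖lat rt‖ ^ 2 * ‖lat vt‖ ^ 2)|
        ≤ C * (1 / ‖r‖ + 1 / ‖v‖) / ((‖r‖ ^ 2 + ‖v‖ ^ 2) * ‖r‖ ^ 2 * ‖v‖ ^ 2) := by
  refine ⟨10^10, by norm_num, ?_⟩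
  intro rt vt r v hrt hvt hr hv
  have hπ3 : (3:ℝ) ≤ Real.pi := Real.pi_gt_three.le
  have hπ4 : Real.pi ≤ 4 := Real.pi_le_four
  have hdr : ‖r - lat rt‖ ≤ 7 * Real.pi / 4 := cube_dist r (lat rt) hr
  have hdv : ‖v - lat vt‖ ≤ 7 * Real.pi / 4 := cube_dist v (lat vt) hv
  have har : |‖r‖ - ‖lat rt‖| ≤ 7 * Real.pi / 4 :=
    le_trans (abs_norm_sub_norm_le r (lat rt)) hdr
  have hav : |‖v‖ - ‖lat vt‖| ≤ 7 * Real.pi / 4 :=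
    le_trans (abs_norm_sub_norm_le v (lat vt)) hdv
  have ha : 3/4 ≤ ‖r‖ := by
    obtain ⟨h1, _⟩ := abs_le.mp har; linarith
  have hb : 3/4 ≤ ‖v‖ := by
    obtain ⟨h1, _⟩ := abs_le.mp hav; linarith
  have hu : (6:ℝ) ≤ ‖lat rt‖ := by linarith
  have hw : (6:ℝ) ≤ ‖lat vt‖ := by linarith
  have hau : |‖r‖ - ‖lat rt‖| ≤ 7 := le_trans har (by linarith)
  have hbw : |‖v‖ - ‖lat vt‖| ≤ 7 := le_trans hav (by linarith)
  have hp : |⟪r, v⟫| ≤ ‖r‖ * ‖v‖ := abs_real_inner_le_norm r v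
  have hq : |⟪lat rt, lat vt⟫| ≤ ‖lat rt‖ * ‖lat vt‖ := abs_real_inner_le_norm _ _
  have hinner : ⟪r, v⟫ - ⟪lat rt, lat vt⟫ = ⟪r - lat rt, v⟫ + ⟪lat rt, v - lat vt⟫ := by
    rw [inner_sub_left, inner_sub_right]; ring
  have hpq : |⟪r, v⟫ - ⟪lat rt, lat vt⟫| ≤ 7 * (‖v‖ + ‖lat rt‖) := by
    calc |⟪r, v⟫ - ⟪lat rt, lat vt⟫| = |⟪r - lat rt, v⟫ + ⟪lat rt, v - lat vt⟫| := by
          rw [hinner]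
    _ ≤ |⟪r - lat rt, v⟫| + |⟪lat rt, v - lat vt⟫| := abs_add_le _ _
    _ ≤ ‖r - lat rt‖ * ‖v‖ + ‖lat rt‖ * ‖v - lat vt‖ :=
          add_le_add (abs_real_inner_le_norm _ _) (abs_real_inner_le_norm _ _)
    _ ≤ (7 * Real.pi / 4) * ‖v‖ + ‖lat rt‖ * (7 * Real.pi / 4) := by
          gcongr
    _ ≤ 7 * (‖v‖ + ‖lat rt‖) := by
          nlinarith [norm_nonneg v, norm_nonneg (lat rt)]
  exact scalar_key ‖r‖ ‖v‖ ‖lat rt‖ ‖lat vt‖ ⟪r, v⟫ ⟪lat rt, lat vt⟫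
    ha hb hu hw hau hbw hp hq hpq
end

section
/- There exists a constant C > 0 such that for every r ∈ Λ*₊ one has Σ_{v ∈ Λ*₊} 1 / ((|r|² + |v|²) |v|²) ≤ C / |r|. -/
open scoped RealInnerProductSpace
open Real MeasureTheory

section AuxLemmas
open Finset

lemma key_sum (a : ℝ) (ha : 1 ≤ a) (N : ℕ) :
    ∑ n ∈ Finset.range N, 1/(a + ((n:ℝ)+1)^2) ≤ 3 / Real.sqrt a := by
  have ha0 : (0:ℝ) < a := by linarith
  set s := Real.sqrt a with hsdef
  have hs1 : 1 ≤ s := by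
    rw [show (1:ℝ) = Real.sqrt 1 by simp [Real.sqrt_one]]
    exact Real.sqrt_le_sqrt ha
  have hs0 : 0 < s := by linarith
  have hss : s^2 = a := Real.sq_sqrt ha0.le
  set M : ℕ := ⌈s⌉₊ with hMdef
  have hMs : s ≤ (M:ℝ) := Nat.le_ceil s
  have hM1 : 1 ≤ M := Nat.one_le_ceil_iff.mpr hs0
  have hM2 : (M:ℝ) ≤ 2*s := by
    have := Nat.ceil_lt_add_one hs0.le
    linarith
  have hb1 : ∀ n:ℕ, 1/(a + ((n:ℝ)+1)^2) ≤ 1/a := by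
    intro n
    apply one_div_le_one_div_of_le ha0
    nlinarith [sq_nonneg ((n:ℝ)+1)]
  have hb2 : ∀ n:ℕ, M ≤ n → 1/(a + ((n:ℝ)+1)^2) ≤ 1/(n:ℝ) - 1/((n:ℝ)+1) := by
    intro n hn
    have h1 : (1:ℝ) ≤ n := by exact_mod_cast le_trans hM1 hn
    have key : 1/(n:ℝ) - 1/((n:ℝ)+1) = 1/((n:ℝ)*((n:ℝ)+1)) := by
      field_simp
      ring
    rw [key]
    apply one_div_le_one_div_of_le (by positivity)
    nlinarith
  have part1 : ∀ K : ℕ, K ≤ M → ∑ n ∈ Finset.range K, 1/(a + ((n:ℝ)+1)^2) ≤ 2/s := by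
    intro K hK
    have hKM : (K:ℝ) ≤ (M:ℝ) := by exact_mod_cast hK
    calc ∑ n ∈ Finset.range K, 1/(a + ((n:ℝ)+1)^2) ≤ ∑ n ∈ Finset.range K, 1/a :=
          Finset.sum_le_sum fun n _ => hb1 n
      _ = K/a := by rw [Finset.sum_const, Finset.card_range]; ring
      _ ≤ 2*s/a := by gcongr; linarith
      _ = 2/s := by rw [← hss]; field_simp
  by_cases hNM : N ≤ M
  · calc ∑ n ∈ Finset.range N, 1/(a + ((n:ℝ)+1)^2) ≤ 2/s := part1 N hNM
      _ ≤ 3/s := by gcongr; norm_num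
  · push_neg at hNM
    have hMN : M ≤ N := hNM.le
    rw [← Finset.sum_range_add_sum_Ico _ hMN]
    have part2 : ∑ n ∈ Finset.Ico M N, 1/(a + ((n:ℝ)+1)^2) ≤ 1/s := by
      have htel : ∀ K, M ≤ K → ∑ n ∈ Finset.Ico M K, (1/(n:ℝ) - 1/((n:ℝ)+1)) = 1/(M:ℝ) - 1/(K:ℝ) := by
        intro K hK
        induction K, hK using Nat.le_induction with
        | base => simp
        | succ n hn ih =>
            rw [Finset.sum_Ico_succ_top hn, ih]
            push_cast
            ring
      calc ∑ n ∈ Finset.Ico M N, 1/(a + ((n:ℝ)+1)^2)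
          ≤ ∑ n ∈ Finset.Ico M N, (1/(n:ℝ) - 1/((n:ℝ)+1)) :=
            Finset.sum_le_sum fun n hn => hb2 n (Finset.mem_Ico.mp hn).1
        _ = 1/(M:ℝ) - 1/(N:ℝ) := htel N hMN
        _ ≤ 1/(M:ℝ) := by
            have : (0:ℝ) ≤ 1/(N:ℝ) := by positivity
            linarith
        _ ≤ 1/s := one_div_le_one_div_of_le hs0 hMs
    have := part1 M le_rfl
    have h3 : 2/s + 1/s = 3/s := by ring
    linarith


lemma norm_lat_sq (v : Fin 3 → ℤ) : ‖lat v‖^2 = 4*Real.pi^2 * ∑ i, ((v i : ℝ))^2 := by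
  rw [EuclideanSpace.norm_eq, Real.sq_sqrt (by positivity)]
  rw [Finset.mul_sum]
  refine Finset.sum_congr rfl fun i _ => ?_
  show ‖2 * Real.pi * (v i : ℝ)‖^2 = _
  rw [Real.norm_eq_abs, sq_abs]
  ring

lemma sumsq_ge_one {v : Fin 3 → ℤ} (hv : v ≠ 0) : (1:ℝ) ≤ ∑ i, ((v i : ℝ))^2 := by
  obtain ⟨i, hi⟩ : ∃ i, v i ≠ 0 := by
    by_contra h
    push_neg at h
    exact hv (funext h)
  have h1 : (1:ℝ) ≤ ((v i : ℝ))^2 := by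
    have : 1 ≤ (v i)^2 := by
      rcases lt_or_gt_of_ne hi with h | h <;> nlinarith
    exact_mod_cast this
  calc (1:ℝ) ≤ ((v i : ℝ))^2 := h1
    _ ≤ ∑ j, ((v j : ℝ))^2 :=
      Finset.single_le_sum (f := fun j => ((v j : ℝ))^2) (fun j _ => sq_nonneg _) (Finset.mem_univ i)

lemma norm_lat_sq_pos {v : Fin 3 → ℤ} (hv : v ≠ 0) : (1:ℝ) ≤ ‖lat v‖^2 := by
  rw [norm_lat_sq]
  nlinarith [sumsq_ge_one hv, Real.pi_gt_three]

/-- the cube `[-N,N]^3` -/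
noncomputable def B (N : ℕ) : Finset (Fin 3 → ℤ) := Finset.Icc (fun _ => -(N:ℤ)) (fun _ => (N:ℤ))

lemma mem_B {N : ℕ} {v : Fin 3 → ℤ} : v ∈ B N ↔ ∀ i, -(N:ℤ) ≤ v i ∧ v i ≤ N := by
  simp [B, Finset.mem_Icc, Pi.le_def, forall_and]

lemma B_subset {N : ℕ} : B N ⊆ B (N+1) := by
  intro v hv
  rw [mem_B] at *
  intro i
  have := hv i
  constructor <;> [push_cast; push_cast] <;> omega

lemma card_B (N : ℕ) : (B N).card = (2*N+1)^3 := by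
  rw [B, Pi.card_Icc]
  simp [Int.card_Icc]
  omega

lemma card_shell (N : ℕ) : (B (N+1) \ B N).card ≤ 26*(N+1)^2 := by
  rw [Finset.card_sdiff_of_subset B_subset, card_B, card_B]
  have h : (2*(N+1)+1)^3 = (24*N^2+48*N+26) + (2*N+1)^3 := by ring
  rw [h, Nat.add_sub_cancel]
  nlinarith

lemma shell_norm {N : ℕ} {v : Fin 3 → ℤ} (hv : v ∈ B (N+1) \ B N) :
    ((N:ℝ)+1)^2 ≤ ∑ i, ((v i : ℝ))^2 := by
  rw [Finset.mem_sdiff] at hv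
  obtain ⟨_, hv2⟩ := hv
  rw [mem_B] at hv2
  push_neg at hv2
  obtain ⟨i, hi⟩ := hv2
  have h1 : ((N:ℤ)+1)^2 ≤ (v i)^2 := by
    rcases le_or_gt (-(N:ℤ)) (v i) with h | h
    · have := hi h
      nlinarith
    · nlinarith
  have h1' : ((N:ℝ)+1)^2 ≤ ((v i : ℝ))^2 := by exact_mod_cast h1
  calc ((N:ℝ)+1)^2 ≤ ((v i : ℝ))^2 := h1'
    _ ≤ ∑ j, ((v j : ℝ))^2 :=
      Finset.single_le_sum (f := fun j => ((v j : ℝ))^2) (fun j _ => sq_nonneg _) (Finset.mem_univ i)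

lemma shell_ne_zero {N : ℕ} {v : Fin 3 → ℤ} (hv : v ∈ B (N+1) \ B N) : v ≠ 0 := by
  rw [Finset.mem_sdiff] at hv
  intro h
  apply hv.2
  rw [h, mem_B]
  intro i
  simp

noncomputable def f (a : ℝ) (v : Fin 3 → ℤ) : ℝ :=
  if v ≠ 0 then 1 / ((a + ‖lat v‖ ^ 2) * ‖lat v‖ ^ 2) else 0

lemma f_nonneg (a : ℝ) (ha : 0 ≤ a) (v : Fin 3 → ℤ) : 0 ≤ f a v := by
  rw [f]
  split_ifs with h
  · have h1 := norm_lat_sq_pos h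
    positivity
  · exact le_refl 0

lemma sum_B_le (a : ℝ) (ha : 1 ≤ a) (N : ℕ) :
    ∑ v ∈ B N, f a v ≤ (26/(4*Real.pi^2)) * ∑ n ∈ Finset.range N, 1/(a+((n:ℝ)+1)^2) := by
  induction N with
  | zero =>
      have hB0 : B 0 = {0} := by
        ext v
        simp only [mem_B, Finset.mem_singleton, funext_iff, Nat.cast_zero, neg_zero, Pi.zero_apply]
        constructor
        · intro h; intro i; have := h i; omega
        · intro h i; rw [show v i = 0 from h i]; omega
      rw [hB0]
      simp [f]
  | succ N ih =>
      have hsplit : ∑ v ∈ B (N+1), f a v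
          = ∑ v ∈ B (N+1) \ B N, f a v + ∑ v ∈ B N, f a v :=
        (Finset.sum_sdiff B_subset).symm
      have hpi : (1:ℝ) ≤ 4*Real.pi^2 := by nlinarith [Real.pi_gt_three]
      have hbound : ∀ v ∈ B (N+1) \ B N,
          f a v ≤ 1 / ((a + ((N:ℝ)+1)^2) * (4*Real.pi^2*((N:ℝ)+1)^2)) := by
        intro v hv
        have hvne := shell_ne_zero hv
        have hL : 4*Real.pi^2*((N:ℝ)+1)^2 ≤ ‖lat v‖^2 := by
          rw [norm_lat_sq]
          have := shell_norm hv
          nlinarith [Real.pi_gt_three]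
        have hL2 : ((N:ℝ)+1)^2 ≤ ‖lat v‖^2 := by nlinarith [sq_nonneg ((N:ℝ)+1)]
        rw [f, if_pos hvne]
        apply one_div_le_one_div_of_le (by positivity)
        have h1 : (0:ℝ) ≤ a + ((N:ℝ)+1)^2 := by positivity
        have h2 : a + ((N:ℝ)+1)^2 ≤ a + ‖lat v‖^2 := by linarith
        have h3 : (0:ℝ) ≤ 4*Real.pi^2*((N:ℝ)+1)^2 := by positivity
        exact mul_le_mul h2 hL h3 (by linarith)
      have hshell : ∑ v ∈ B (N+1) \ B N, f a v
          ≤ (26/(4*Real.pi^2)) * (1/(a+((N:ℝ)+1)^2)) := by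
        calc ∑ v ∈ B (N+1) \ B N, f a v
            ≤ (B (N+1) \ B N).card • (1 / ((a + ((N:ℝ)+1)^2) * (4*Real.pi^2*((N:ℝ)+1)^2))) :=
              Finset.sum_le_card_nsmul _ _ _ hbound
          _ = ((B (N+1) \ B N).card : ℝ) * (1 / ((a + ((N:ℝ)+1)^2) * (4*Real.pi^2*((N:ℝ)+1)^2))) := by
              rw [nsmul_eq_mul]
          _ ≤ (26*((N:ℝ)+1)^2) * (1 / ((a + ((N:ℝ)+1)^2) * (4*Real.pi^2*((N:ℝ)+1)^2))) := by
              apply mul_le_mul_of_nonneg_right ?_ (by positivity)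
              have := card_shell N
              calc ((B (N+1) \ B N).card : ℝ) ≤ ((26*(N+1)^2 : ℕ) : ℝ) := by exact_mod_cast this
                _ = 26*((N:ℝ)+1)^2 := by push_cast; ring
          _ = (26/(4*Real.pi^2)) * (1/(a+((N:ℝ)+1)^2)) := by
              have hNe : ((N:ℝ)+1)^2 ≠ 0 := by positivity
              have hpine : Real.pi ≠ 0 := Real.pi_ne_zero
              have hane : a + ((N:ℝ)+1)^2 ≠ 0 := by positivity
              field_simp
      rw [hsplit, Finset.sum_range_succ, mul_add]
      have := add_le_add hshell ih
      linarith

end AuxLemmas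

open Finset in
/-- There exists `C > 0` such that for every `r ∈ Λ*₊`,
`Σ_{v ∈ Λ*₊} 1/((|r|² + |v|²)|v|²) ≤ C/|r|`. -/
theorem lattice_sum_resolvent_bound :
    ∃ C > 0, ∀ r : Fin 3 → ℤ, r ≠ 0 →
      (∑' v : Fin 3 → ℤ,
          if v ≠ 0 then 1 / ((‖lat r‖ ^ 2 + ‖lat v‖ ^ 2) * ‖lat v‖ ^ 2) else 0)
        ≤ C / ‖lat r‖ := by
  refine ⟨78/(4*Real.pi^2), by positivity, fun r hr => ?_⟩
  set a := ‖lat r‖^2 with hadef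
  have ha : 1 ≤ a := norm_lat_sq_pos hr
  have hnorm : Real.sqrt a = ‖lat r‖ := Real.sqrt_sq (norm_nonneg _)
  have hnorm_pos : 0 < ‖lat r‖ := by
    rw [← hnorm]
    have : (0:ℝ) < a := by linarith
    positivity
  have hfun : (fun v : Fin 3 → ℤ =>
      if v ≠ 0 then 1 / ((‖lat r‖ ^ 2 + ‖lat v‖ ^ 2) * ‖lat v‖ ^ 2) else 0) = f a := by
    funext v
    rw [f]
  rw [show (∑' v : Fin 3 → ℤ,
      if v ≠ 0 then 1 / ((‖lat r‖ ^ 2 + ‖lat v‖ ^ 2) * ‖lat v‖ ^ 2) else 0)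
      = ∑' v, f a v from congrArg tsum hfun]
  apply tsum_le_of_sum_le' (by positivity)
  intro s
  obtain ⟨N, hsub⟩ : ∃ N : ℕ, s ⊆ B N := by
    refine ⟨s.sup (fun v => Finset.univ.sup fun i => (v i).natAbs), ?_⟩
    intro v hv
    rw [mem_B]
    intro i
    have h1 : (v i).natAbs ≤ Finset.univ.sup fun j => (v j).natAbs :=
      Finset.le_sup (f := fun j => (v j).natAbs) (Finset.mem_univ i)
    have h2 : (Finset.univ.sup fun j => (v j).natAbs) ≤
        s.sup (fun v => Finset.univ.sup fun i => (v i).natAbs) :=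
      Finset.le_sup (f := fun v => Finset.univ.sup fun i => (v i).natAbs) hv
    have h3 := le_trans h1 h2
    have h4 : |v i| ≤ ((s.sup (fun v => Finset.univ.sup fun i => (v i).natAbs) : ℕ) : ℤ) := by
      rw [Int.abs_eq_natAbs]
      exact_mod_cast h3
    exact abs_le.mp h4
  calc ∑ v ∈ s, f a v ≤ ∑ v ∈ B N, f a v :=
        Finset.sum_le_sum_of_subset_of_nonneg hsub
          (fun v _ _ => f_nonneg a (by linarith) v)
    _ ≤ (26/(4*Real.pi^2)) * ∑ n ∈ Finset.range N, 1/(a+((n:ℝ)+1)^2) := sum_B_le a ha N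
    _ ≤ (26/(4*Real.pi^2)) * (3 / Real.sqrt a) := by
        apply mul_le_mul_of_nonneg_left (key_sum a ha N) (by positivity)
    _ = 78/(4*Real.pi^2) / ‖lat r‖ := by
        rw [hnorm]
        ring
end

section
/- There exists a constant C > 0 such that for every v ∈ Λ*₊ one has Σ_{s ∈ Λ*₊, s ≠ −v} 1 / (|s|² |s + v|²) ≤ C / |v|. -/
open scoped RealInnerProductSpace
open Real MeasureTheory

namespace LatticeConv

/-- natural sup-norm on `ℤ³` -/
def m3 (s : Fin 3 → ℤ) : ℕ := max (s 0).natAbs (max (s 1).natAbs (s 2).natAbs)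

lemma natAbs_le_m3 (s : Fin 3 → ℤ) (i : Fin 3) : (s i).natAbs ≤ m3 s := by
  fin_cases i <;> simp [m3]

lemma m3_eq_zero {s : Fin 3 → ℤ} : m3 s = 0 ↔ s = 0 := by
  constructor
  · intro h
    funext i
    have := natAbs_le_m3 s i
    simp only [Pi.zero_apply]
    omega
  · intro h; subst h; simp [m3]

lemma one_le_m3 {s : Fin 3 → ℤ} (hs : s ≠ 0) : 1 ≤ m3 s := by
  rcases Nat.eq_zero_or_pos (m3 s) with h | h
  · exact absurd (m3_eq_zero.mp h) hs
  · exact h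

lemma lat_add (s v : Fin 3 → ℤ) : lat (s + v) = lat s + lat v := by
  ext i
  simp only [lat, Pi.add_apply, PiLp.add_apply, PiLp.toLp_apply]
  push_cast
  ring

lemma lat_norm_lower (s : Fin 3 → ℤ) : 2 * π * m3 s ≤ ‖lat s‖ := by
  obtain ⟨i, hi⟩ : ∃ i : Fin 3, (s i).natAbs = m3 s := by
    have h : (s 0).natAbs = m3 s ∨ (s 1).natAbs = m3 s ∨ (s 2).natAbs = m3 s := by
      simp only [m3]; omega
    rcases h with h | h | h
    exacts [⟨0, h⟩, ⟨1, h⟩, ⟨2, h⟩]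
  have h1 : (2 * π * m3 s : ℝ) = ‖(lat s) i‖ := by
    simp only [lat, Real.norm_eq_abs, PiLp.toLp_apply]
    rw [abs_mul, abs_of_nonneg (by positivity : (0:ℝ) ≤ 2 * π)]
    rw [← hi, Nat.cast_natAbs]
    push_cast
    ring
  rw [h1, EuclideanSpace.norm_eq]
  have h2 : ‖(lat s) i‖ = Real.sqrt (‖(lat s) i‖ ^ 2) := by
    rw [Real.sqrt_sq (norm_nonneg _)]
  rw [h2]
  apply Real.sqrt_le_sqrt
  exact Finset.single_le_sum (f := fun j => ‖(lat s) j‖ ^ 2)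
    (fun j _ => by positivity) (Finset.mem_univ i)

lemma lat_norm_upper (s : Fin 3 → ℤ) : ‖lat s‖ ≤ 4 * π * m3 s := by
  rw [EuclideanSpace.norm_eq]
  have key : ∀ j : Fin 3, ‖(lat s) j‖ ^ 2 ≤ (2 * π * m3 s) ^ 2 := by
    intro j
    have h1 : ‖(lat s) j‖ ≤ 2 * π * m3 s := by
      simp only [lat, Real.norm_eq_abs, PiLp.toLp_apply]
      rw [abs_mul, abs_of_nonneg (by positivity : (0:ℝ) ≤ 2 * π)]
      have : |(s j : ℝ)| = ((s j).natAbs : ℝ) := by push_cast [Nat.cast_natAbs]; ring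
      rw [this]
      have := natAbs_le_m3 s j
      have hpi : (0:ℝ) < 2 * π := by positivity
      have : ((s j).natAbs : ℝ) ≤ (m3 s : ℝ) := by exact_mod_cast natAbs_le_m3 s j
      nlinarith
    have := norm_nonneg ((lat s) j)
    nlinarith
  have hsum : ∑ j : Fin 3, ‖(lat s) j‖ ^ 2 ≤ 3 * (2 * π * m3 s) ^ 2 := by
    calc ∑ j : Fin 3, ‖(lat s) j‖ ^ 2 ≤ ∑ _j : Fin 3, (2 * π * m3 s) ^ 2 :=
          Finset.sum_le_sum fun j _ => key j
      _ = 3 * (2 * π * m3 s) ^ 2 := by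
          rw [Finset.sum_const]
          simp [Finset.card_univ]
  calc Real.sqrt (∑ j : Fin 3, ‖(lat s) j‖ ^ 2) ≤ Real.sqrt ((4 * π * m3 s) ^ 2) := by
        apply Real.sqrt_le_sqrt
        nlinarith [Real.pi_pos, Nat.cast_nonneg (α := ℝ) (m3 s)]
    _ = 4 * π * m3 s := Real.sqrt_sq (by positivity)

lemma lat_norm_pos {s : Fin 3 → ℤ} (hs : s ≠ 0) : 0 < ‖lat s‖ := by
  have h1 := lat_norm_lower s
  have h2 : (1:ℝ) ≤ m3 s := by exact_mod_cast one_le_m3 hs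
  nlinarith [Real.pi_pos]

end LatticeConv
namespace LatticeConv

/-- solid box of sup-norm radius `n` -/
noncomputable def bigbox (n : ℕ) : Finset (Fin 3 → ℤ) :=
  Fintype.piFinset fun _ => Finset.Icc (-(n : ℤ)) n

lemma mem_bigbox {s : Fin 3 → ℤ} {n : ℕ} : s ∈ bigbox n ↔ m3 s ≤ n := by
  simp only [bigbox, Fintype.mem_piFinset, Finset.mem_Icc]
  constructor
  · intro h
    have h0 := h 0; have h1 := h 1; have h2 := h 2
    simp only [m3]; omega
  · intro h i
    have := natAbs_le_m3 s i
    omega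

lemma card_bigbox (n : ℕ) : (bigbox n).card = (2 * n + 1) ^ 3 := by
  rw [bigbox, Fintype.card_piFinset]
  have : (Finset.Icc (-(n:ℤ)) n).card = 2 * n + 1 := by
    rw [Int.card_Icc]
    omega
  simp [this]

/-- hollow shell of sup-norm exactly `n` -/
noncomputable def shell (n : ℕ) : Finset (Fin 3 → ℤ) := {s ∈ bigbox n | m3 s = n}

lemma mem_shell {s : Fin 3 → ℤ} {n : ℕ} : s ∈ shell n ↔ m3 s = n := by
  simp only [shell, Finset.mem_filter, mem_bigbox]
  exact ⟨fun h => h.2, fun h => ⟨le_of_eq h, h⟩⟩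

lemma card_shell_le (n : ℕ) : (shell n).card ≤ 26 * n ^ 2 ∨ n = 0 := by
  rcases Nat.eq_zero_or_pos n with h | h
  · exact Or.inr h
  left
  have hsub : shell n ⊆ bigbox n \ bigbox (n - 1) := by
    intro s hs
    rw [mem_shell] at hs
    rw [Finset.mem_sdiff, mem_bigbox, mem_bigbox]
    omega
  have hsub2 : bigbox (n - 1) ⊆ bigbox n := by
    intro s hs
    rw [mem_bigbox] at *
    omega
  have hcard := Finset.card_le_card hsub
  rw [Finset.card_sdiff_of_subset hsub2, card_bigbox, card_bigbox] at hcard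
  refine hcard.trans ?_
  obtain ⟨m, rfl⟩ : ∃ m, n = m + 1 := ⟨n - 1, by omega⟩
  have e1 : (2 * (m + 1) + 1) ^ 3 = (2 * (m + 1 - 1) + 1) ^ 3 + (24 * m ^ 2 + 48 * m + 26) := by
    simp only [Nat.add_sub_cancel]
    ring
  rw [e1, Nat.add_sub_cancel_left]
  nlinarith [Nat.zero_le m]

lemma shells_exun (s : Fin 3 → ℤ) : ∃! n : ℕ, s ∈ (shell n : Set (Fin 3 → ℤ)) := by
  refine ⟨m3 s, ?_, fun n hn => ?_⟩
  · simp [Finset.mem_coe, mem_shell]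
  · simp only [Finset.mem_coe, mem_shell] at hn
    omega

/-- Workhorse: shell-decomposition bound for sums over `ℤ³`. -/
lemma tsum_shell_bound (F : (Fin 3 → ℤ) → ℝ) (h : ℕ → ℝ)
    (hF0 : ∀ s, 0 ≤ F s) (hFh : ∀ s, F s ≤ h (m3 s)) (hh0 : h 0 = 0)
    (hh : ∀ n, 0 ≤ h n) (hsum : Summable fun n : ℕ => 26 * (n : ℝ) ^ 2 * h n) :
    Summable F ∧ ∑' s, F s ≤ ∑' n : ℕ, 26 * (n : ℝ) ^ 2 * h n := by
  set S : ℕ → Set (Fin 3 → ℤ) := fun n => (shell n : Set (Fin 3 → ℤ)) with hS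
  -- fiber sums
  have fib_eq : ∀ n : ℕ, (∑' x : S n, F x) = ∑ s ∈ shell n, F s := fun n =>
    Finset.tsum_subtype (shell n) F
  have fib_bound : ∀ n : ℕ, (∑' x : S n, F x) ≤ 26 * (n : ℝ) ^ 2 * h n := by
    intro n
    rw [fib_eq]
    rcases card_shell_le n with hc | hc
    · calc ∑ s ∈ shell n, F s ≤ ∑ s ∈ shell n, h n := by
            apply Finset.sum_le_sum
            intro s hs
            have := hFh s
            rwa [mem_shell.mp hs] at this
        _ = (shell n).card * h n := by rw [Finset.sum_const, nsmul_eq_mul]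
        _ ≤ 26 * (n : ℝ) ^ 2 * h n := by
            apply mul_le_mul_of_nonneg_right _ (hh n)
            calc ((shell n).card : ℝ) ≤ ((26 * n ^ 2 : ℕ) : ℝ) := by exact_mod_cast hc
              _ = 26 * (n : ℝ) ^ 2 := by push_cast; ring
    · subst hc
      have : ∀ s ∈ shell 0, F s ≤ 0 := by
        intro s hs
        have := hFh s
        rwa [mem_shell.mp hs, hh0] at this
      have h1 : ∑ s ∈ shell 0, F s ≤ 0 := Finset.sum_nonpos this
      simpa using h1
  have fib_nonneg : ∀ n : ℕ, 0 ≤ (∑' x : S n, F x) := by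
    intro n
    rw [fib_eq]
    exact Finset.sum_nonneg fun s _ => hF0 s
  have fib_summable : ∀ n : ℕ, Summable fun x : S n => F x := fun n =>
    (hasSum_fintype _).summable
  have outer_summable : Summable fun n : ℕ => ∑' x : S n, F x :=
    Summable.of_nonneg_of_le fib_nonneg fib_bound hsum
  have hFs : Summable F :=
    (summable_partition (fun s => hF0 s) shells_exun).mpr ⟨fib_summable, outer_summable⟩
  refine ⟨hFs, ?_⟩
  have hsig : Summable fun p : Σ n : ℕ, S n => F ((Set.sigmaEquiv S shells_exun) p) :=
    (Set.sigmaEquiv S shells_exun).summable_iff.mpr hFs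
  calc ∑' s, F s = ∑' p : Σ n : ℕ, S n, F ((Set.sigmaEquiv S shells_exun) p) :=
        ((Set.sigmaEquiv S shells_exun).tsum_eq F).symm
    _ = ∑' (n : ℕ) (x : S n), F x := by
        rw [Summable.tsum_sigma hsig]
        rfl
    _ ≤ ∑' n : ℕ, 26 * (n : ℝ) ^ 2 * h n := Summable.tsum_le_tsum fib_bound outer_summable hsum

end LatticeConv
namespace LatticeConv

lemma tail_inv_sq (M : ℕ) (hM : 1 ≤ M) :
    Summable (fun n : ℕ => if M ≤ n then ((n : ℝ) ^ 2)⁻¹ else 0) ∧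
      ∑' n : ℕ, (if M ≤ n then ((n : ℝ) ^ 2)⁻¹ else 0) ≤ 2 / M := by
  have hnn : ∀ n : ℕ, 0 ≤ (if M ≤ n then ((n : ℝ) ^ 2)⁻¹ else 0) := by
    intro n; split_ifs with h
    · positivity
    · exact le_refl 0
  have key : ∀ u : Finset ℕ, ∑ n ∈ u, (if M ≤ n then ((n : ℝ) ^ 2)⁻¹ else 0) ≤ 2 / M := by
    intro u
    have h1 : ∑ n ∈ u, (if M ≤ n then ((n : ℝ) ^ 2)⁻¹ else 0)
        = ∑ n ∈ u.filter (fun n => M ≤ n), ((n : ℝ) ^ 2)⁻¹ := (Finset.sum_filter _ _).symm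
    rw [h1]
    have h2 : u.filter (fun n => M ≤ n) ⊆ Finset.Ioo (M - 1) (u.sup id + 1) := by
      intro n hn
      rw [Finset.mem_filter] at hn
      have hle : n ≤ u.sup id := Finset.le_sup (f := id) hn.1
      rw [Finset.mem_Ioo]
      omega
    have hcast : ((M - 1 : ℕ) : ℝ) + 1 = (M : ℝ) := by
      rw [Nat.cast_sub hM]; ring
    calc ∑ n ∈ u.filter (fun n => M ≤ n), ((n : ℝ) ^ 2)⁻¹
        ≤ ∑ n ∈ Finset.Ioo (M - 1) (u.sup id + 1), ((n : ℝ) ^ 2)⁻¹ :=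
          Finset.sum_le_sum_of_subset_of_nonneg h2 (fun i _ _ => by positivity)
      _ ≤ 2 / (((M - 1 : ℕ) : ℝ) + 1) := sum_Ioo_inv_sq_le _ _
      _ = 2 / M := by rw [hcast]
  have hs := summable_of_sum_le hnn key
  exact ⟨hs, Summable.tsum_le_of_sum_le hs key⟩

lemma ball_series (c : ℝ) (hc : 0 ≤ c) (N : ℕ) :
    Summable (fun n : ℕ => 26 * (n : ℝ) ^ 2 * (if 1 ≤ n ∧ n ≤ N then c / (n : ℝ) ^ 2 else 0)) ∧
      ∑' n : ℕ, 26 * (n : ℝ) ^ 2 * (if 1 ≤ n ∧ n ≤ N then c / (n : ℝ) ^ 2 else 0)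
        ≤ 26 * c * N := by
  have hzero : ∀ n ∉ Finset.Icc 1 N,
      26 * (n : ℝ) ^ 2 * (if 1 ≤ n ∧ n ≤ N then c / (n : ℝ) ^ 2 else 0) = 0 := by
    intro n hn
    rw [Finset.mem_Icc] at hn
    rw [if_neg (by omega), mul_zero]
  refine ⟨summable_of_ne_finset_zero hzero, ?_⟩
  rw [tsum_eq_sum hzero]
  have hterm : ∀ n ∈ Finset.Icc 1 N,
      26 * (n : ℝ) ^ 2 * (if 1 ≤ n ∧ n ≤ N then c / (n : ℝ) ^ 2 else 0) ≤ 26 * c := by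
    intro n hn
    rw [Finset.mem_Icc] at hn
    rw [if_pos (by omega)]
    have hn0 : (0 : ℝ) < (n : ℝ) := by exact_mod_cast hn.1
    have : 26 * (n : ℝ) ^ 2 * (c / (n : ℝ) ^ 2) = 26 * c := by
      field_simp
    rw [this]
  calc ∑ n ∈ Finset.Icc 1 N, 26 * (n : ℝ) ^ 2 * (if 1 ≤ n ∧ n ≤ N then c / (n : ℝ) ^ 2 else 0)
      ≤ ∑ _n ∈ Finset.Icc 1 N, 26 * c := Finset.sum_le_sum hterm
    _ = (Finset.Icc 1 N).card * (26 * c) := by rw [Finset.sum_const, nsmul_eq_mul]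
    _ = 26 * c * N := by rw [Nat.card_Icc]; push_cast; ring

lemma tail_series (c : ℝ) (hc : 0 ≤ c) (N : ℕ) :
    Summable (fun n : ℕ => 26 * (n : ℝ) ^ 2 * (if N < 4 * n then c / (n : ℝ) ^ 4 else 0)) ∧
      ∑' n : ℕ, 26 * (n : ℝ) ^ 2 * (if N < 4 * n then c / (n : ℝ) ^ 4 else 0)
        ≤ 208 * c / (N + 1) := by
  set M : ℕ := N / 4 + 1 with hM
  have hM1 : 1 ≤ M := by omega
  obtain ⟨hgs, hgle⟩ := tail_inv_sq M hM1
  have hpt : ∀ n : ℕ, 26 * (n : ℝ) ^ 2 * (if N < 4 * n then c / (n : ℝ) ^ 4 else 0)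
      ≤ 26 * c * (if M ≤ n then ((n : ℝ) ^ 2)⁻¹ else 0) := by
    intro n
    by_cases h : N < 4 * n
    · have hn1 : 1 ≤ n := by omega
      have hMn : M ≤ n := by omega
      rw [if_pos h, if_pos hMn]
      have hn0 : (0 : ℝ) < (n : ℝ) := by exact_mod_cast hn1
      have : 26 * (n : ℝ) ^ 2 * (c / (n : ℝ) ^ 4) = 26 * c * ((n : ℝ) ^ 2)⁻¹ := by
        field_simp
      rw [this]
    · rw [if_neg h, mul_zero]
      split_ifs with h'
      · positivity
      · rw [mul_zero]
  have hnn : ∀ n : ℕ, 0 ≤ 26 * (n : ℝ) ^ 2 * (if N < 4 * n then c / (n : ℝ) ^ 4 else 0) := by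
    intro n
    split_ifs with h
    · positivity
    · rw [mul_zero]
  have hsum : Summable (fun n : ℕ => 26 * (n : ℝ) ^ 2 * (if N < 4 * n then c / (n : ℝ) ^ 4 else 0)) :=
    Summable.of_nonneg_of_le hnn hpt ((hgs.mul_left (26 * c)))
  refine ⟨hsum, ?_⟩
  calc ∑' n : ℕ, 26 * (n : ℝ) ^ 2 * (if N < 4 * n then c / (n : ℝ) ^ 4 else 0)
      ≤ ∑' n : ℕ, 26 * c * (if M ≤ n then ((n : ℝ) ^ 2)⁻¹ else 0) :=
        Summable.tsum_le_tsum hpt hsum (hgs.mul_left (26 * c))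
    _ = 26 * c * ∑' n : ℕ, (if M ≤ n then ((n : ℝ) ^ 2)⁻¹ else 0) := tsum_mul_left
    _ ≤ 26 * c * (2 / M) := by
        apply mul_le_mul_of_nonneg_left hgle (by positivity)
    _ ≤ 208 * c / (N + 1) := by
        have hMpos : (0 : ℝ) < (M : ℝ) := by exact_mod_cast hM1
        have hN1 : (0 : ℝ) < (N : ℝ) + 1 := by positivity
        have h4M : (N : ℝ) + 1 ≤ 4 * M := by
          have : N + 1 ≤ 4 * M := by omega
          exact_mod_cast this
        rw [mul_div_assoc']
        rw [div_le_div_iff₀ hMpos hN1]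
        nlinarith
  
end LatticeConv
set_option maxHeartbeats 1600000 in
open LatticeConv in
/-- There exists `C > 0` such that for every `v ∈ Λ*₊`,
`Σ_{s ∈ Λ*₊, s ≠ −v} 1/(|s|²|s+v|²) ≤ C/|v|`. -/
theorem lattice_convolution_bound :
    ∃ C > 0, ∀ v : Fin 3 → ℤ, v ≠ 0 →
      (∑' s : Fin 3 → ℤ,
          if s ≠ 0 ∧ s ≠ -v then 1 / (‖lat s‖ ^ 2 * ‖lat (s + v)‖ ^ 2) else 0)
        ≤ C / ‖lat v‖ := by
  refine ⟨100, by norm_num, fun v hv => ?_⟩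
  have hpi : (3 : ℝ) < π := Real.pi_gt_three
  have hpipos : (0 : ℝ) < π := Real.pi_pos
  have h9 : (9 : ℝ) ≤ π ^ 2 := by nlinarith
  have hp3 : (27 : ℝ) ≤ π ^ 3 := by nlinarith [mul_le_mul hpi.le h9 (by norm_num) hpipos.le]
  set V : ℝ := ‖lat v‖ with hVdef
  have hVpos : 0 < V := lat_norm_pos hv
  set N : ℕ := m3 v with hNdef
  have hN1 : 1 ≤ N := one_le_m3 hv
  have hN1R : (1 : ℝ) ≤ (N : ℝ) := by exact_mod_cast hN1
  have hVlow : 2 * π * (N : ℝ) ≤ V := lat_norm_lower v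
  have hVup : V ≤ 4 * π * (N : ℝ) := lat_norm_upper v
  set c1 : ℝ := 1 / (π ^ 2 * V ^ 2) with hc1
  set c3 : ℝ := 1 / (2 * π) ^ 4 with hc3
  have hc1nn : 0 ≤ c1 := by rw [hc1]; positivity
  have hc3nn : 0 ≤ c3 := by rw [hc3]; positivity
  set G : (Fin 3 → ℤ) → ℝ :=
    fun t => if t ≠ 0 ∧ 2 * ‖lat t‖ ≤ V then 4 / V ^ 2 * (1 / ‖lat t‖ ^ 2) else 0 with hGdef
  set A : (Fin 3 → ℤ) → ℝ :=
    fun t => if t ≠ 0 ∧ V < 2 * ‖lat t‖ then 1 / ‖lat t‖ ^ 4 else 0 with hAdef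
  have hGnn : ∀ t, 0 ≤ G t := by
    intro t
    simp only [hGdef]
    split_ifs with h
    · positivity
    · exact le_rfl
  have hAnn : ∀ t, 0 ≤ A t := by
    intro t
    simp only [hAdef]
    split_ifs with h
    · positivity
    · exact le_rfl
  -- bound G by its shell majorant
  have hGle : ∀ t, G t ≤ (if 1 ≤ m3 t ∧ m3 t ≤ N then c1 / ((m3 t : ℝ)) ^ 2 else 0) := by
    intro t
    simp only [hGdef]
    split_ifs with h h2 h2
    · -- main case
      obtain ⟨ht0, htV⟩ := h
      have hml := lat_norm_lower t
      have hlt : 0 < ‖lat t‖ := lat_norm_pos ht0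
      have hm1 : (1 : ℝ) ≤ (m3 t : ℝ) := by exact_mod_cast one_le_m3 ht0
      have e1 : 4 / V ^ 2 * (1 / ‖lat t‖ ^ 2) = 4 / (V ^ 2 * ‖lat t‖ ^ 2) := by ring
      have e2 : c1 / ((m3 t : ℝ)) ^ 2 = 1 / (π ^ 2 * V ^ 2 * ((m3 t : ℝ)) ^ 2) := by
        rw [hc1]; ring
      rw [e1, e2, div_le_div_iff₀ (by positivity) (by positivity)]
      have hsq : (2 * π * ((m3 t : ℝ))) ^ 2 ≤ ‖lat t‖ ^ 2 :=
        pow_le_pow_left₀ (by positivity) hml 2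
      nlinarith [sq_nonneg V, hVpos, hsq, mul_pos hVpos hVpos]
    · -- condition holds but majorant condition fails: contradiction
      exfalso
      obtain ⟨ht0, htV⟩ := h
      apply h2
      constructor
      · exact one_le_m3 ht0
      · have h1 := lat_norm_lower t
        have : ((m3 t : ℝ)) ≤ (N : ℝ) := by nlinarith
        exact_mod_cast this
    · positivity
    · exact le_rfl
  have hAle : ∀ t, A t ≤ (if N < 4 * m3 t then c3 / ((m3 t : ℝ)) ^ 4 else 0) := by
    intro t
    simp only [hAdef]
    split_ifs with h h2 h2
    · obtain ⟨ht0, htV⟩ := h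
      have hml := lat_norm_lower t
      have hlt : 0 < ‖lat t‖ := lat_norm_pos ht0
      have hm1 : (1 : ℝ) ≤ (m3 t : ℝ) := by exact_mod_cast one_le_m3 ht0
      have e2 : c3 / ((m3 t : ℝ)) ^ 4 = 1 / ((2 * π) ^ 4 * ((m3 t : ℝ)) ^ 4) := by
        rw [hc3]; ring
      rw [e2, div_le_div_iff₀ (by positivity) (by positivity)]
      have hsq : (2 * π * ((m3 t : ℝ))) ^ 2 ≤ ‖lat t‖ ^ 2 :=
        pow_le_pow_left₀ (by positivity) hml 2
      nlinarith [hsq, sq_nonneg (‖lat t‖ ^ 2), sq_nonneg ((2 * π * ((m3 t : ℝ))) ^ 2), hlt]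
    · exfalso
      obtain ⟨ht0, htV⟩ := h
      apply h2
      have hmu := lat_norm_upper t
      have : (N : ℝ) < 4 * ((m3 t : ℝ)) := by nlinarith
      exact_mod_cast this
    · positivity
    · exact le_rfl
  -- apply the shell machinery
  obtain ⟨hGsum, hGtsum⟩ := tsum_shell_bound G
    (fun n => if 1 ≤ n ∧ n ≤ N then c1 / (n : ℝ) ^ 2 else 0) hGnn hGle (by simp)
    (fun n => by split_ifs with h; exacts [by positivity, le_rfl]) (ball_series c1 hc1nn N).1
  obtain ⟨hAsum, hAtsum⟩ := tsum_shell_bound A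
    (fun n => if N < 4 * n then c3 / (n : ℝ) ^ 4 else 0) hAnn hAle (by simp)
    (fun n => by split_ifs with h; exacts [by positivity, le_rfl]) (tail_series c3 hc3nn N).1
  have hGbound : (∑' t, G t) ≤ 26 * c1 * N := hGtsum.trans (ball_series c1 hc1nn N).2
  have hAbound : (∑' t, A t) ≤ 208 * c3 / (N + 1) := hAtsum.trans (tail_series c3 hc3nn N).2
  -- shifted versions
  have hG'sum : Summable (fun s : Fin 3 → ℤ => G (s + v)) := by
    have := (Equiv.addRight v).summable_iff (f := G) |>.mpr hGsum
    simpa [Function.comp_def] using this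
  have hA'sum : Summable (fun s : Fin 3 → ℤ => A (s + v)) := by
    have := (Equiv.addRight v).summable_iff (f := A) |>.mpr hAsum
    simpa [Function.comp_def] using this
  have hG'tsum : (∑' s : Fin 3 → ℤ, G (s + v)) = ∑' t, G t := by
    have := (Equiv.addRight v).tsum_eq G
    simpa using this
  have hA'tsum : (∑' s : Fin 3 → ℤ, A (s + v)) = ∑' t, A t := by
    have := (Equiv.addRight v).tsum_eq A
    simpa using this
  -- pointwise domination
  have key : ∀ s : Fin 3 → ℤ,
      (if s ≠ 0 ∧ s ≠ -v then 1 / (‖lat s‖ ^ 2 * ‖lat (s + v)‖ ^ 2) else 0)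
        ≤ G s + G (s + v) + 1 / 2 * (A s + A (s + v)) := by
    intro s
    have hGs := hGnn s
    have hGsv := hGnn (s + v)
    have hAs := hAnn s
    have hAsv := hAnn (s + v)
    by_cases hc : s ≠ 0 ∧ s ≠ -v
    · obtain ⟨hs0, hsv⟩ := hc
      have hsv0 : s + v ≠ 0 := by
        intro h
        exact hsv (eq_neg_of_add_eq_zero_left h)
      rw [if_pos ⟨hs0, hsv⟩]
      have ha : 0 < ‖lat s‖ := lat_norm_pos hs0
      have hb : 0 < ‖lat (s + v)‖ := lat_norm_pos hsv0
      have htri : V ≤ ‖lat s‖ + ‖lat (s + v)‖ := by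
        have h' : lat (s + v) - lat s = lat v := by rw [lat_add]; abel
        have h2 : ‖lat (s + v) - lat s‖ ≤ ‖lat (s + v)‖ + ‖lat s‖ := norm_sub_le _ _
        rw [h'] at h2
        rw [hVdef]
        linarith
      by_cases h1 : 2 * ‖lat s‖ ≤ V
      · have hGs' : G s = 4 / V ^ 2 * (1 / ‖lat s‖ ^ 2) := by
          simp only [hGdef]
          rw [if_pos ⟨hs0, h1⟩]
        have hVb : V ≤ 2 * ‖lat (s + v)‖ := by linarith
        have hmain : 1 / (‖lat s‖ ^ 2 * ‖lat (s + v)‖ ^ 2) ≤ 4 / V ^ 2 * (1 / ‖lat s‖ ^ 2) := by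
          have e1 : 4 / V ^ 2 * (1 / ‖lat s‖ ^ 2) = 4 / (V ^ 2 * ‖lat s‖ ^ 2) := by ring
          rw [e1, div_le_div_iff₀ (by positivity) (by positivity)]
          nlinarith [mul_nonneg (mul_nonneg (sub_nonneg.2 hVb)
            (by positivity : (0:ℝ) ≤ V + 2 * ‖lat (s + v)‖)) (sq_nonneg ‖lat s‖)]
        rw [hGs']
        linarith
      · by_cases h2 : 2 * ‖lat (s + v)‖ ≤ V
        · have hGsv' : G (s + v) = 4 / V ^ 2 * (1 / ‖lat (s + v)‖ ^ 2) := by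
            simp only [hGdef]
            rw [if_pos ⟨hsv0, h2⟩]
          have hVa : V ≤ 2 * ‖lat s‖ := by linarith
          have hmain : 1 / (‖lat s‖ ^ 2 * ‖lat (s + v)‖ ^ 2)
              ≤ 4 / V ^ 2 * (1 / ‖lat (s + v)‖ ^ 2) := by
            have e1 : 4 / V ^ 2 * (1 / ‖lat (s + v)‖ ^ 2) = 4 / (V ^ 2 * ‖lat (s + v)‖ ^ 2) := by
              ring
            rw [e1, div_le_div_iff₀ (by positivity) (by positivity)]
            nlinarith [mul_nonneg (mul_nonneg (sub_nonneg.2 hVa)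
              (by positivity : (0:ℝ) ≤ V + 2 * ‖lat s‖)) (sq_nonneg ‖lat (s + v)‖)]
          rw [hGsv']
          linarith
        · push_neg at h1 h2
          have hAs' : A s = 1 / ‖lat s‖ ^ 4 := by
            simp only [hAdef]
            rw [if_pos ⟨hs0, h1⟩]
          have hAsv' : A (s + v) = 1 / ‖lat (s + v)‖ ^ 4 := by
            simp only [hAdef]
            rw [if_pos ⟨hsv0, h2⟩]
          have e : 1 / 2 * (1 / ‖lat s‖ ^ 4 + 1 / ‖lat (s + v)‖ ^ 4)
              - 1 / (‖lat s‖ ^ 2 * ‖lat (s + v)‖ ^ 2)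
              = (1 / ‖lat s‖ ^ 2 - 1 / ‖lat (s + v)‖ ^ 2) ^ 2 / 2 := by
            field_simp
            ring
          have hpos : (0 : ℝ) ≤ (1 / ‖lat s‖ ^ 2 - 1 / ‖lat (s + v)‖ ^ 2) ^ 2 / 2 := by
            positivity
          rw [hAs', hAsv']
          linarith
    · rw [if_neg hc]
      linarith
  -- summability of the left-hand side
  have hRHSsum : Summable (fun s : Fin 3 → ℤ => G s + G (s + v) + 1 / 2 * (A s + A (s + v))) :=
    (hGsum.add hG'sum).add ((hAsum.add hA'sum).mul_left (1 / 2))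
  have hfnn : ∀ s : Fin 3 → ℤ,
      0 ≤ (if s ≠ 0 ∧ s ≠ -v then 1 / (‖lat s‖ ^ 2 * ‖lat (s + v)‖ ^ 2) else 0) := by
    intro s
    split_ifs with h
    · positivity
    · exact le_rfl
  have hfsum : Summable (fun s : Fin 3 → ℤ =>
      if s ≠ 0 ∧ s ≠ -v then 1 / (‖lat s‖ ^ 2 * ‖lat (s + v)‖ ^ 2) else 0) :=
    Summable.of_nonneg_of_le hfnn key hRHSsum
  -- final numeric bounds
  have hfin1 : 2 * (26 * c1 * N) ≤ 2 / V := by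
    have e : 2 * (26 * c1 * N) = 52 * (N : ℝ) / (π ^ 2 * V ^ 2) := by rw [hc1]; ring
    rw [e, div_le_div_iff₀ (by positivity) hVpos]
    nlinarith [mul_le_mul_of_nonneg_left hVlow (by positivity : (0:ℝ) ≤ π ^ 2 * V), hp3,
      mul_nonneg (Nat.cast_nonneg N : (0:ℝ) ≤ (N:ℝ)) hVpos.le, hVpos, hpipos]
  have hfin2 : 208 * c3 / ((N : ℝ) + 1) ≤ 98 / V := by
    have e : 208 * c3 / ((N : ℝ) + 1) = 13 / (π ^ 4 * ((N : ℝ) + 1)) := by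
      rw [hc3]
      field_simp
      ring
    rw [e, div_le_div_iff₀ (by positivity) hVpos]
    nlinarith [hVup, hp3, hpipos, hN1R,
      mul_le_mul_of_nonneg_left hp3 (by positivity : (0:ℝ) ≤ π * ((N : ℝ) + 1)),
      mul_nonneg hpipos.le (Nat.cast_nonneg N : (0:ℝ) ≤ (N:ℝ))]
  calc (∑' s : Fin 3 → ℤ,
        if s ≠ 0 ∧ s ≠ -v then 1 / (‖lat s‖ ^ 2 * ‖lat (s + v)‖ ^ 2) else 0)
      ≤ ∑' s : Fin 3 → ℤ, (G s + G (s + v) + 1 / 2 * (A s + A (s + v))) :=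
        Summable.tsum_le_tsum key hfsum hRHSsum
    _ = ((∑' s : Fin 3 → ℤ, G s) + (∑' s : Fin 3 → ℤ, G (s + v)))
        + 1 / 2 * ((∑' s : Fin 3 → ℤ, A s) + (∑' s : Fin 3 → ℤ, A (s + v))) := by
        rw [Summable.tsum_add (hGsum.add hG'sum) ((hAsum.add hA'sum).mul_left (1 / 2)),
          Summable.tsum_add hGsum hG'sum, tsum_mul_left, Summable.tsum_add hAsum hA'sum]
    _ = 2 * (∑' t, G t) + (∑' t, A t) := by rw [hG'tsum, hA'tsum]; ring
    _ ≤ 2 * (26 * c1 * N) + 208 * c3 / ((N : ℝ) + 1) := by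
        have h1 : 2 * (∑' t, G t) ≤ 2 * (26 * c1 * N) := by linarith
        linarith
    _ ≤ 2 / V + 98 / V := by linarith
    _ = 100 / V := by ring
end

section
/- For every ε ∈ (0, 2) there exists a constant C_ε > 0 such that for every v ∈ Λ*₊ one has Σ_{r ∈ Λ*₊, r ≠ −v} 1 / (|r|³ |r + v|²) ≤ C_ε · |v|^{−2+ε}. -/
open scoped RealInnerProductSpace
open Real MeasureTheory

lemma lat_add' (r v : Fin 3 → ℤ) : lat (r + v) = lat r + lat v := by
  ext i
  simp only [lat, Pi.add_apply, PiLp.add_apply, PiLp.toLp_apply]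
  push_cast
  ring

lemma abs_coord_le (x : EuclideanSpace ℝ (Fin 3)) (i : Fin 3) : |x i| ≤ ‖x‖ := by
  rw [EuclideanSpace.norm_eq, ← Real.sqrt_sq_eq_abs]
  apply Real.sqrt_le_sqrt
  have := Finset.single_le_sum (f := fun j => ‖x j‖ ^ 2)
    (fun j _ => by positivity) (Finset.mem_univ i)
  simpa [Real.norm_eq_abs, sq_abs] using this

lemma latabs (r : Fin 3 → ℤ) (i : Fin 3) : 2 * Real.pi * |(r i : ℝ)| ≤ ‖lat r‖ := by
  have h := abs_coord_le (lat r) i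
  rwa [show (lat r) i = 2 * Real.pi * (r i : ℝ) by simp [lat], abs_mul,
    abs_of_pos (by positivity : (0:ℝ) < 2 * Real.pi)] at h

lemma one_le_norm_lat {r : Fin 3 → ℤ} (hr : r ≠ 0) : 1 ≤ ‖lat r‖ := by
  obtain ⟨i, hi⟩ := Function.ne_iff.mp hr
  have h1 : (1:ℝ) ≤ |(r i : ℝ)| := by
    rw [← Int.cast_abs]; exact_mod_cast Int.one_le_abs (by simpa using hi)
  have := latabs r i
  nlinarith [Real.pi_gt_three]

lemma norm_lat_pos {r : Fin 3 → ℤ} (hr : r ≠ 0) : 0 < ‖lat r‖ :=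
  lt_of_lt_of_le one_pos (one_le_norm_lat hr)

noncomputable def g (p : ℝ) (a : ℤ) : ℝ := if a = 0 then 1 else |(a:ℝ)| ^ (-p)

lemma g_nonneg (p : ℝ) (a : ℤ) : 0 ≤ g p a := by
  unfold g; split <;> positivity

lemma summable_g {p : ℝ} (hp : 1 < p) : Summable (g p) := by
  have h1 : Summable (fun a : ℤ => 1 / |(a:ℝ) + 0| ^ p) :=
    (Real.summable_one_div_int_add_rpow 0 p).mpr hp
  have h2 : Summable (fun a : ℤ => if a = 0 then (1:ℝ) else 0) :=
    summable_of_ne_finset_zero (s := {0}) (by intro a ha; simp at ha; simp [ha])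
  refine (h1.add h2).congr fun a => ?_
  by_cases ha : a = 0
  · simp [ha, g, Real.zero_rpow (by positivity : p ≠ 0)]
  · have : (a:ℝ) ≠ 0 := by exact_mod_cast ha
    simp [ha, g, Real.rpow_neg (abs_nonneg _), one_div, add_zero]

def e3 : (Fin 3 → ℤ) ≃ ℤ × ℤ × ℤ where
  toFun r := (r 0, r 1, r 2)
  invFun p := ![p.1, p.2.1, p.2.2]
  left_inv r := by funext i; fin_cases i <;> rfl
  right_inv p := rfl

lemma summable_G {p : ℝ} (hp : 1 < p) :
    Summable (fun r : Fin 3 → ℤ => g p (r 0) * (g p (r 1) * g p (r 2))) := by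
  have H2 : Summable (fun y : ℤ × ℤ => g p y.1 * g p y.2) :=
    (summable_g hp).mul_of_nonneg (summable_g hp) (fun a => g_nonneg p a)
      (fun a => g_nonneg p a)
  have H : Summable (fun x : ℤ × ℤ × ℤ => g p x.1 * (g p x.2.1 * g p x.2.2)) :=
    (summable_g hp).mul_of_nonneg H2 (fun a => g_nonneg p a)
      (fun y => mul_nonneg (g_nonneg _ _) (g_nonneg _ _))
  exact (H.comp_injective e3.injective).congr (fun r => rfl)

lemma summable_F {q : ℝ} (hq : 3 < q) :
    Summable (fun r : Fin 3 → ℤ => if r = 0 then 0 else ‖lat r‖ ^ (-q)) := by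
  set p := q / 3 with hp
  have hp1 : 1 < p := by rw [hp]; linarith
  apply Summable.of_nonneg_of_le _ _ (summable_G hp1)
  · intro r; split <;> positivity
  · intro r
    by_cases hr : r = 0
    · simp only [hr, if_pos rfl]
      exact mul_nonneg (g_nonneg _ _) (mul_nonneg (g_nonneg _ _) (g_nonneg _ _))
    · rw [if_neg hr]
      have hpos := norm_lat_pos hr
      have key : ∀ i : Fin 3, ‖lat r‖ ^ (-p) ≤ g p (r i) := by
        intro i
        unfold g
        split
        · next h =>
          rw [show (1:ℝ) = 1 ^ (-p) by simp]
          exact Real.rpow_le_rpow_of_nonpos one_pos (one_le_norm_lat hr) (by linarith)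
        · next h =>
          have h1 : |(r i : ℝ)| ≤ ‖lat r‖ := by
            have := latabs r i
            nlinarith [Real.pi_gt_three, abs_nonneg ((r i : ℝ))]
          have habs : (0:ℝ) < |(r i : ℝ)| := by
            have : (r i : ℝ) ≠ 0 := by exact_mod_cast h
            positivity
          exact Real.rpow_le_rpow_of_nonpos habs h1 (by linarith)
      have hsplit : ‖lat r‖ ^ (-q) = ‖lat r‖ ^ (-p) * (‖lat r‖ ^ (-p) * ‖lat r‖ ^ (-p)) := by
        rw [← Real.rpow_add hpos, ← Real.rpow_add hpos]
        congr 1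
        rw [hp]; ring
      rw [hsplit]
      have h0 : (0:ℝ) ≤ ‖lat r‖ ^ (-p) := by positivity
      have hg0 : (0:ℝ) ≤ g p (r 1) := g_nonneg _ _
      gcongr
      · exact g_nonneg _ _
      · exact key 0
      · exact key 1
      · exact key 2
lemma key_geom {a b q u v : ℝ} (ha : 0 < a) (hb : 0 < b) (hq : 0 < q)
    (hu : 0 ≤ u) (hv : 0 ≤ v) (huv : u + v = q) :
    a ^ (-u) * b ^ (-v) ≤ a ^ (-q) + b ^ (-q) := by
  have hA : (0:ℝ) ≤ a ^ (-q) := by positivity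
  have hB : (0:ℝ) ≤ b ^ (-q) := by positivity
  have h := Real.geom_mean_le_arith_mean2_weighted
    (w₁ := u/q) (w₂ := v/q) (p₁ := a ^ (-q)) (p₂ := b ^ (-q))
    (by positivity) (by positivity) hA hB
    (by field_simp; linarith)
  have h1 : (a ^ (-q)) ^ (u/q) = a ^ (-u) := by
    rw [← Real.rpow_mul ha.le]
    congr 1
    field_simp
  have h2 : (b ^ (-q)) ^ (v/q) = b ^ (-v) := by
    rw [← Real.rpow_mul hb.le]
    congr 1
    field_simp
  rw [h1, h2] at h
  refine h.trans ?_
  have hu1 : u/q ≤ 1 := by rw [div_le_one hq]; linarith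
  have hv1 : v/q ≤ 1 := by rw [div_le_one hq]; linarith
  have hu0 : 0 ≤ u/q := by positivity
  have hv0 : 0 ≤ v/q := by positivity
  nlinarith

lemma core {ε a b c : ℝ} (hε0 : 0 < ε) (hε2 : ε < 2) (ha : 1 ≤ a) (hb : 1 ≤ b)
    (hc : 0 < c) (hcab : c ≤ a + b) :
    1 / (a ^ 3 * b ^ 2) ≤ 8 * c ^ (ε - 2) * (a ^ (-(3 + ε/2)) + b ^ (-(3 + ε/2))) := by
  have ha0 : (0:ℝ) < a := by linarith
  have hb0 : (0:ℝ) < b := by linarith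
  set q : ℝ := 3 + ε/2 with hqdef
  have hq : (0:ℝ) < q := by rw [hqdef]; linarith
  set S : ℝ := a ^ (-q) + b ^ (-q) with hS
  have hS0 : (0:ℝ) < S := by
    have : (0:ℝ) < a ^ (-q) := Real.rpow_pos_of_pos ha0 _
    have : (0:ℝ) < b ^ (-q) := Real.rpow_pos_of_pos hb0 _
    rw [hS]; positivity
  have hP : (0:ℝ) < a ^ 3 * b ^ 2 := by positivity
  -- natural powers as rpow
  have ha3 : a ^ (3:ℕ) = a ^ ((3:ℝ)) := by rw [← Real.rpow_natCast a 3]; norm_num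
  have hb2 : b ^ (2:ℕ) = b ^ ((2:ℝ)) := by rw [← Real.rpow_natCast b 2]; norm_num
  -- Step B
  have stepB : a ^ (2 - ε) ≤ S * (a ^ 3 * b ^ 2) := by
    have idA : a ^ (2 - ε) = (a ^ (-(1 + ε)) * b ^ (-(2:ℝ))) * (a ^ 3 * b ^ 2) := by
      rw [ha3, hb2, mul_mul_mul_comm, ← Real.rpow_add ha0, ← Real.rpow_add hb0]
      norm_num
      ring_nf
    have k1 : a ^ (-(1 + ε)) * b ^ (-(2:ℝ)) ≤ a ^ (-(1 + ε/2)) * b ^ (-(2:ℝ)) := by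
      have : a ^ (-(1 + ε)) ≤ a ^ (-(1 + ε/2)) :=
        Real.rpow_le_rpow_of_exponent_le ha (by linarith)
      have hbp : (0:ℝ) ≤ b ^ (-(2:ℝ)) := by positivity
      nlinarith
    have k2 : a ^ (-(1 + ε/2)) * b ^ (-(2:ℝ)) ≤ S :=
      key_geom ha0 hb0 hq (by linarith) (by linarith) (by rw [hqdef]; ring)
    rw [idA]
    have := k1.trans k2
    nlinarith
  -- Step C
  have stepC : b ^ (2 - ε) ≤ S * (a ^ 3 * b ^ 2) := by
    have idC : b ^ (2 - ε) = (a ^ (-(3:ℝ)) * b ^ (-ε)) * (a ^ 3 * b ^ 2) := by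
      rw [ha3, hb2, mul_mul_mul_comm, ← Real.rpow_add ha0, ← Real.rpow_add hb0]
      norm_num
      ring_nf
    have k1 : a ^ (-(3:ℝ)) * b ^ (-ε) ≤ a ^ (-(3:ℝ)) * b ^ (-(ε/2)) := by
      have : b ^ (-ε) ≤ b ^ (-(ε/2)) :=
        Real.rpow_le_rpow_of_exponent_le hb (by linarith)
      have hap : (0:ℝ) ≤ a ^ (-(3:ℝ)) := by positivity
      nlinarith
    have k2 : a ^ (-(3:ℝ)) * b ^ (-(ε/2)) ≤ S :=
      key_geom ha0 hb0 hq (by norm_num) (by linarith) hqdef.symm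
    rw [idC]
    have := k1.trans k2
    nlinarith
  -- Step A
  have stepA : c ^ (2 - ε) ≤ 4 * (a ^ (2 - ε) + b ^ (2 - ε)) := by
    have h2ε : (0:ℝ) ≤ 2 - ε := by linarith
    have h4 : (2:ℝ) ^ (2 - ε) ≤ 4 := by
      have : (2:ℝ) ^ (2 - ε) ≤ (2:ℝ) ^ ((2:ℝ)) :=
        Real.rpow_le_rpow_of_exponent_le one_le_two (by linarith)
      have h22 : (2:ℝ) ^ ((2:ℝ)) = 4 := by
        rw [show ((2:ℝ)) = ((2:ℕ):ℝ) by norm_num, Real.rpow_natCast]; norm_num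
      linarith
    rcases le_total a b with h | h
    · have h1 : c ^ (2 - ε) ≤ (2 * b) ^ (2 - ε) :=
        Real.rpow_le_rpow hc.le (by linarith) h2ε
      rw [Real.mul_rpow (by norm_num) hb0.le] at h1
      have hbe : (0:ℝ) ≤ b ^ (2 - ε) := by positivity
      have hae : (0:ℝ) ≤ a ^ (2 - ε) := by positivity
      nlinarith
    · have h1 : c ^ (2 - ε) ≤ (2 * a) ^ (2 - ε) :=
        Real.rpow_le_rpow hc.le (by linarith) h2ε
      rw [Real.mul_rpow (by norm_num) ha0.le] at h1
      have hbe : (0:ℝ) ≤ b ^ (2 - ε) := by positivity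
      have hae : (0:ℝ) ≤ a ^ (2 - ε) := by positivity
      nlinarith
  have key : c ^ (2 - ε) ≤ 8 * S * (a ^ 3 * b ^ 2) := by nlinarith
  have hC : (0:ℝ) < c ^ (2 - ε) := Real.rpow_pos_of_pos hc _
  have main : 1 / (a ^ 3 * b ^ 2) ≤ 8 * S / c ^ (2 - ε) := by
    rw [div_le_div_iff₀ hP hC]
    calc 1 * c ^ (2 - ε) = c ^ (2 - ε) := one_mul _
      _ ≤ 8 * S * (a ^ 3 * b ^ 2) := key
      _ = 8 * S / 1 * (a ^ 3 * b ^ 2) := by ring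
      _ = 8 * S * (a ^ 3 * b ^ 2) := by ring
  calc 1 / (a ^ 3 * b ^ 2) ≤ 8 * S / c ^ (2 - ε) := main
    _ = 8 * c ^ (ε - 2) * S := by
        rw [show ε - 2 = -(2 - ε) by ring, Real.rpow_neg hc.le]
        field_simp

/-- For every `ε ∈ (0, 2)` there exists `C_ε > 0` such that for every
`v ∈ Λ*₊`, `Σ_{r ∈ Λ*₊, r ≠ −v} 1/(|r|³|r+v|²) ≤ C_ε · |v|^{−2+ε}`. -/
theorem lattice_convolution_cubic_bound (ε : ℝ) (hε0 : 0 < ε) (hε2 : ε < 2) :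
    ∃ C > 0, ∀ v : Fin 3 → ℤ, v ≠ 0 →
      (∑' r : Fin 3 → ℤ,
          if r ≠ 0 ∧ r ≠ -v then 1 / (‖lat r‖ ^ 3 * ‖lat (r + v)‖ ^ 2) else 0)
        ≤ C * ‖lat v‖ ^ (-2 + ε) := by
  set q : ℝ := 3 + ε/2 with hqdef
  have hq3 : (3:ℝ) < q := by rw [hqdef]; linarith
  set F : (Fin 3 → ℤ) → ℝ := fun r => if r = 0 then 0 else ‖lat r‖ ^ (-q) with hF
  have hFsum : Summable F := summable_F hq3
  have hFnonneg : ∀ r, 0 ≤ F r := by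
    intro r; rw [hF]; dsimp only; split <;> positivity
  set Z : ℝ := ∑' r, F r with hZ
  have hZ0 : 0 ≤ Z := tsum_nonneg hFnonneg
  refine ⟨16 * Z + 1, by positivity, fun v hv => ?_⟩
  set c : ℝ := ‖lat v‖ with hc
  have hc0 : 0 < c := norm_lat_pos hv
  -- shifted summable function
  have hF'sum : Summable (fun r => F (r + v)) :=
    (hFsum.comp_injective (add_left_injective v)).congr (fun r => rfl)
  have hF'tsum : ∑' r, F (r + v) = Z := (Equiv.addRight v).tsum_eq F
  -- the bound function
  set B : (Fin 3 → ℤ) → ℝ := fun r => 8 * c ^ (ε - 2) * (F r + F (r + v)) with hB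
  have hBsum : Summable B := ((hFsum.add hF'sum).mul_left _)
  have hcpow : (0:ℝ) ≤ c ^ (ε - 2) := by positivity
  set f : (Fin 3 → ℤ) → ℝ := fun r =>
    if r ≠ 0 ∧ r ≠ -v then 1 / (‖lat r‖ ^ 3 * ‖lat (r + v)‖ ^ 2) else 0 with hf
  have hfnonneg : ∀ r, 0 ≤ f r := by
    intro r; rw [hf]; dsimp only; split <;> positivity
  have hfB : ∀ r, f r ≤ B r := by
    intro r
    rw [hf, hB]; dsimp only
    split
    · next h =>
      obtain ⟨hr0, hrv⟩ := h
      have hrv0 : r + v ≠ 0 := by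
        intro hcon
        apply hrv
        have := congrArg (· - v) hcon
        simpa [sub_eq_add_neg, add_assoc] using this
      have ha := one_le_norm_lat hr0
      have hb := one_le_norm_lat hrv0
      have htri : c ≤ ‖lat r‖ + ‖lat (r + v)‖ := by
        have hlat : lat v = lat (r + v) - lat r := by
          rw [lat_add' r v]; abel
        rw [hc, hlat]
        exact (norm_sub_le _ _).trans (by rw [add_comm])
      have hcore := core hε0 hε2 ha hb hc0 htri
      refine hcore.trans (le_of_eq ?_)
      have e1 : F r = ‖lat r‖ ^ (-q) := if_neg hr0
      have e2 : F (r + v) = ‖lat (r + v)‖ ^ (-q) := if_neg hrv0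
      rw [e1, e2, hqdef]
    · next h =>
      have h1 : 0 ≤ F r + F (r + v) := add_nonneg (hFnonneg r) (hFnonneg _)
      positivity
  have hfsum : Summable f := Summable.of_nonneg_of_le hfnonneg hfB hBsum
  have h1 : (∑' r, f r) ≤ ∑' r, B r := Summable.tsum_le_tsum hfB hfsum hBsum
  have h2 : (∑' r, B r) = 8 * c ^ (ε - 2) * (Z + Z) := by
    rw [hB]
    rw [tsum_mul_left, Summable.tsum_add hFsum hF'sum, hF'tsum]
  have h3 : (∑' r, f r) ≤ 16 * Z * c ^ (ε - 2) := by
    rw [h2] at h1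
    nlinarith
  calc (∑' r, f r) ≤ 16 * Z * c ^ (ε - 2) := h3
    _ ≤ (16 * Z + 1) * c ^ (ε - 2) := by nlinarith
    _ = (16 * Z + 1) * c ^ (-2 + ε) := by ring_nf
end

section
/- For every K > 0 there exists a constant C > 0 such that the following holds for every real N ≥ 1: if Φ : Λ*₊ → ℝ and Φ₀ ∈ ℝ satisfy 0 ≤ Φ(p) ≤ K for all p, 0 ≤ Φ₀ ≤ K, and |Φ(p) − Φ₀| ≤ K |p|²/N² for all p ∈ Λ*₊, then Σ_{p ∈ Λ*₊} | [Φ(p) + |p|² − √(|p|⁴ + 2|p|²Φ(p)) − Φ(p)²/(2|p|²)] − [Φ₀ + |p|² − √(|p|⁴ + 2|p|²Φ₀) − Φ₀²/(2|p|²)] | ≤ C/N. -/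
open scoped RealInnerProductSpace
open Real MeasureTheory

lemma aux_summable (N : ℝ) : Summable (fun n : ℕ => 1 / (((n : ℝ) + 1) ^ 2 + N ^ 2)) := by
  have h0 : Summable (fun n : ℕ => 1 / ((n : ℝ) + 1) ^ 2) := by
    have := (summable_nat_add_iff (f := fun n : ℕ => 1 / (n : ℝ) ^ 2) 1).mpr
      (summable_one_div_nat_pow.mpr one_lt_two)
    simpa using this
  refine Summable.of_nonneg_of_le (fun n => by positivity) (fun n => ?_) h0
  apply one_div_le_one_div_of_le (by positivity)
  nlinarith [sq_nonneg N]

lemma aux_tsum_le (N : ℝ) (hN : 1 ≤ N) :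
    (∑' n : ℕ, 1 / (((n : ℝ) + 1) ^ 2 + N ^ 2)) ≤ 3 / N := by
  have hN0 : (0 : ℝ) < N := lt_of_lt_of_le one_pos hN
  set f : ℕ → ℝ := fun n => 1 / (((n : ℝ) + 1) ^ 2 + N ^ 2) with hf
  have hs := aux_summable N
  set M := ⌈N⌉₊ with hM
  have hM1 : 1 ≤ M := Nat.one_le_ceil_iff.mpr hN0
  have hMN : N ≤ (M : ℝ) := Nat.le_ceil N
  have hMN' : (M : ℝ) ≤ 2 * N := by
    have := Nat.ceil_lt_add_one (le_of_lt hN0)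
    nlinarith
  rw [← Summable.sum_add_tsum_nat_add M hs]
  have h1 : ∑ i ∈ Finset.range M, f i ≤ 2 / N := by
    have : ∀ i ∈ Finset.range M, f i ≤ 1 / N ^ 2 := by
      intro i _
      apply one_div_le_one_div_of_le (by positivity)
      nlinarith [sq_nonneg ((i:ℝ)+1)]
    calc ∑ i ∈ Finset.range M, f i ≤ ∑ i ∈ Finset.range M, 1 / N ^ 2 :=
          Finset.sum_le_sum this
      _ = (M : ℝ) / N ^ 2 := by
          rw [Finset.sum_const, Finset.card_range, nsmul_eq_mul]; ring
      _ ≤ (2 * N) / N ^ 2 := by gcongr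
      _ = 2 / N := by field_simp
  have h2 : (∑' n : ℕ, f (n + M)) ≤ 1 / N := by
    have hMR : (0:ℝ) < (M:ℝ) := lt_of_lt_of_le hN0 hMN
    have key : ∀ u : Finset ℕ, ∑ n ∈ u, f (n + M) ≤ 1 / (M : ℝ) := by
      intro u
      set B := u.sup id + 1 with hB
      have hsub : u ⊆ Finset.range B := by
        intro n hn
        exact Finset.mem_range.mpr (Nat.lt_succ_of_le (Finset.le_sup (f := id) hn))
      have hle : ∑ n ∈ u, f (n + M) ≤ ∑ n ∈ Finset.range B, f (n + M) :=
        Finset.sum_le_sum_of_subset_of_nonneg hsub (fun n _ _ => by positivity)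
      have htel : ∑ n ∈ Finset.range B, f (n + M)
          ≤ ∑ n ∈ Finset.range B, (1 / ((n : ℝ) + M) - 1 / ((n : ℝ) + M + 1)) := by
        apply Finset.sum_le_sum
        intro n _
        have hnM : (0:ℝ) < (n : ℝ) + M := by positivity
        have heq : 1 / ((n : ℝ) + M) - 1 / ((n : ℝ) + M + 1)
            = 1 / (((n : ℝ) + M) * ((n : ℝ) + M + 1)) := by
          field_simp
          ring
        rw [heq, hf]
        push_cast
        apply one_div_le_one_div_of_le (by positivity)
        nlinarith [sq_nonneg N]
      have hts : ∑ n ∈ Finset.range B, (1 / ((n : ℝ) + M) - 1 / ((n : ℝ) + M + 1))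
          = 1 / (M : ℝ) - 1 / ((B : ℝ) + M) := by
        clear hle htel hsub hB
        induction B with
        | zero => simp
        | succ B ih =>
          rw [Finset.sum_range_succ, ih]
          push_cast
          ring
      have : ∑ n ∈ Finset.range B, f (n + M) ≤ 1 / (M : ℝ) - 1 / ((B : ℝ) + M) :=
        htel.trans_eq hts
      have hpos : 0 ≤ 1 / ((B : ℝ) + M) := by positivity
      linarith [hle]
    have := tsum_le_of_sum_le' (L := SummationFilter.unconditional ℕ) (by positivity : (0:ℝ) ≤ 1 / (M:ℝ)) key
    calc (∑' n : ℕ, f (n + M)) ≤ 1 / (M : ℝ) := this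
      _ ≤ 1 / N := one_div_le_one_div_of_le hN0 hMN
  have h3 : (2:ℝ)/N + 1/N = 3/N := by ring
  exact le_of_le_of_eq (add_le_add h1 h2) h3

/-- Crude cubic bound on the Bogoliubov summand. -/
lemma bogo_crude {x Φ : ℝ} (hx : 0 < x) (hΦ : 0 ≤ Φ) :
    |Φ + x - Real.sqrt (x ^ 2 + 2 * x * Φ) - Φ ^ 2 / (2 * x)| ≤ Φ ^ 3 / x ^ 2 := by
  set s := Real.sqrt (x ^ 2 + 2 * x * Φ) with hsdef
  have harg : (0:ℝ) ≤ x ^ 2 + 2 * x * Φ := by positivity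
  have hs2 : s ^ 2 = x ^ 2 + 2 * x * Φ := Real.sq_sqrt harg
  have hs0 : 0 ≤ s := Real.sqrt_nonneg _
  have hsx : x ≤ s := by
    nlinarith [hs2, hs0]
  have hsu : s ≤ x + Φ := by
    nlinarith [hs2, hs0]
  have hden : 0 < 2 * x * (x + Φ + s) := by nlinarith
  have key : (Φ + x - s - Φ ^ 2 / (2 * x)) * (2 * x * (x + Φ + s))
      = Φ ^ 2 * (x - Φ - s) := by
    have hd : Φ ^ 2 / (2 * x) * (2 * x) = Φ ^ 2 := div_mul_cancel₀ _ (by positivity)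
    linear_combination (-2 * x) * hs2 - (x + Φ + s) * hd
  have hrepr : Φ + x - s - Φ ^ 2 / (2 * x)
      = Φ ^ 2 * (x - Φ - s) / (2 * x * (x + Φ + s)) := by
    rw [eq_div_iff hden.ne']
    exact key
  rw [hrepr, abs_div, abs_of_pos hden]
  have hnum : |Φ ^ 2 * (x - Φ - s)| ≤ Φ ^ 2 * (2 * Φ) := by
    rw [abs_mul, abs_of_nonneg (sq_nonneg Φ)]
    have : |x - Φ - s| ≤ 2 * Φ := abs_le.mpr ⟨by linarith, by linarith⟩
    nlinarith [sq_nonneg Φ]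
  calc |Φ ^ 2 * (x - Φ - s)| / (2 * x * (x + Φ + s))
      ≤ Φ ^ 2 * (2 * Φ) / (2 * x * (2 * x)) := by
        apply div_le_div₀ (by positivity) hnum (by positivity)
        nlinarith
    _ ≤ Φ ^ 3 / x ^ 2 := by
        rw [div_le_div_iff₀ (by positivity) (by positivity)]
        nlinarith [mul_nonneg (pow_nonneg hΦ 3) (sq_nonneg x)]

/-- Bound on the `Φ`-derivative of the Bogoliubov summand. -/
lemma bogo_deriv_bound {x t K : ℝ} (hx : 0 < x) (ht : 0 ≤ t) (htK : t ≤ K) :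
    |1 - x / Real.sqrt (x ^ 2 + 2 * x * t) - t / x| ≤ 3 * K ^ 2 / (2 * x ^ 2) := by
  set s := Real.sqrt (x ^ 2 + 2 * x * t) with hsdef
  have harg : (0:ℝ) ≤ x ^ 2 + 2 * x * t := by positivity
  have hs2 : s ^ 2 = x ^ 2 + 2 * x * t := Real.sq_sqrt harg
  have hs0 : 0 ≤ s := Real.sqrt_nonneg _
  have hsx : x ≤ s := by nlinarith [hs2, hs0]
  have hsu : s ≤ x + t := by nlinarith [hs2, hs0]
  have hspos : 0 < s := lt_of_lt_of_le hx hsx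
  have hden : 0 < s * (s + x) := by nlinarith
  have hrepr : 1 - x / s - t / x = t * (x - 2 * t - s) / (s * (s + x)) := by
    rw [eq_div_iff hden.ne']
    field_simp
    linear_combination (x - t) * hs2
  rw [hrepr, abs_div, abs_of_pos hden]
  have hnum : |t * (x - 2 * t - s)| ≤ 3 * t ^ 2 := by
    rw [abs_mul, abs_of_nonneg ht]
    have : |x - 2 * t - s| ≤ 3 * t := abs_le.mpr ⟨by linarith, by linarith⟩
    nlinarith
  have hK0 : 0 ≤ K := le_trans ht htK
  calc |t * (x - 2 * t - s)| / (s * (s + x)) ≤ 3 * t ^ 2 / (2 * x ^ 2) := by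
        apply div_le_div₀ (by positivity) hnum (by positivity)
        nlinarith
    _ ≤ 3 * K ^ 2 / (2 * x ^ 2) := by
        apply div_le_div_of_nonneg_right ?_ (by positivity)
        · nlinarith

/-- Lipschitz comparison of the Bogoliubov summand in `Φ`. -/
lemma bogo_lip {x K : ℝ} (hx : 0 < x) (hK : 0 < K) {a b : ℝ}
    (ha : a ∈ Set.Icc (0:ℝ) K) (hb : b ∈ Set.Icc (0:ℝ) K) :
    |(a + x - Real.sqrt (x ^ 2 + 2 * x * a) - a ^ 2 / (2 * x))
      - (b + x - Real.sqrt (x ^ 2 + 2 * x * b) - b ^ 2 / (2 * x))|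
      ≤ 3 * K ^ 2 / (2 * x ^ 2) * |a - b| := by
  set f : ℝ → ℝ := fun t => t + x - Real.sqrt (x ^ 2 + 2 * x * t) - t ^ 2 / (2 * x) with hfdef
  set f' : ℝ → ℝ := fun t => 1 - x / Real.sqrt (x ^ 2 + 2 * x * t) - t / x with hf'def
  have hderiv : ∀ t ∈ Set.Icc (0:ℝ) K, HasDerivWithinAt f (f' t) (Set.Icc (0:ℝ) K) t := by
    intro t ht
    have hargpos : 0 < x ^ 2 + 2 * x * t := by nlinarith [ht.1]
    have h1 : HasDerivAt (fun u : ℝ => x ^ 2 + 2 * x * u) (2 * x) t := by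
      simpa using ((hasDerivAt_id t).const_mul (2 * x)).const_add (x ^ 2)
    have h2 : HasDerivAt (fun u : ℝ => Real.sqrt (x ^ 2 + 2 * x * u))
        (1 / (2 * Real.sqrt (x ^ 2 + 2 * x * t)) * (2 * x)) t :=
      (Real.hasDerivAt_sqrt hargpos.ne').comp t h1
    have h3 : HasDerivAt (fun u : ℝ => u ^ 2 / (2 * x)) ((2 * t) / (2 * x)) t := by
      simpa using (hasDerivAt_pow 2 t).div_const (2 * x)
    have h4 : HasDerivAt f (1 - 1 / (2 * Real.sqrt (x ^ 2 + 2 * x * t)) * (2 * x)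
        - (2 * t) / (2 * x)) t := by
      exact (((hasDerivAt_id t).add_const x).sub h2).sub h3
    have heq : 1 - 1 / (2 * Real.sqrt (x ^ 2 + 2 * x * t)) * (2 * x) - (2 * t) / (2 * x)
        = f' t := by
      have hsq : 0 < Real.sqrt (x ^ 2 + 2 * x * t) := Real.sqrt_pos.mpr hargpos
      rw [hf'def]
      field_simp
    rw [heq] at h4
    exact h4.hasDerivWithinAt
  have hbound : ∀ t ∈ Set.Icc (0:ℝ) K, ‖f' t‖ ≤ 3 * K ^ 2 / (2 * x ^ 2) := by
    intro t ht
    exact bogo_deriv_bound hx ht.1 ht.2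
  have := Convex.norm_image_sub_le_of_norm_hasDerivWithin_le hderiv hbound
    (convex_Icc 0 K) hb ha
  simpa [Real.norm_eq_abs] using this

lemma shell_card (u : Finset (Fin 3 → ℤ)) (m : ℕ) (hm : 1 ≤ m) :
    (u.filter (fun p => (Finset.univ.sup fun i => (p i).natAbs) = m)).card ≤ 26 * m ^ 2 := by
  classical
  set box : Finset (Fin 3 → ℤ) := Fintype.piFinset (fun _ => Finset.Icc (-(m:ℤ)) m) with hbox
  set box' : Finset (Fin 3 → ℤ) :=
    Fintype.piFinset (fun _ => Finset.Icc (-((m:ℤ) - 1)) ((m:ℤ) - 1)) with hbox'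
  have hsub : u.filter (fun p => (Finset.univ.sup fun i => (p i).natAbs) = m) ⊆ box \ box' := by
    intro p hp
    rw [Finset.mem_filter] at hp
    obtain ⟨-, hsup⟩ := hp
    have hle : ∀ i, (p i).natAbs ≤ m := by
      intro i
      rw [← hsup]
      exact Finset.le_sup (f := fun j => (p j).natAbs) (Finset.mem_univ i)
    obtain ⟨i0, -, hi0⟩ := Finset.exists_mem_eq_sup Finset.univ
      ⟨0, Finset.mem_univ 0⟩ (fun i => (p i).natAbs)
    rw [hsup] at hi0
    rw [Finset.mem_sdiff]
    constructor
    · rw [hbox, Fintype.mem_piFinset]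
      intro i
      rw [Finset.mem_Icc]
      have := hle i
      omega
    · rw [hbox', Fintype.mem_piFinset]
      push_neg
      refine ⟨i0, ?_⟩
      rw [Finset.mem_Icc]
      omega
  have hbox'sub : box' ⊆ box := by
    apply Fintype.piFinset_subset
    intro i
    apply Finset.Icc_subset_Icc <;> omega
  have hcard : (box \ box').card = (2 * m + 1) ^ 3 - (2 * m - 1) ^ 3 := by
    rw [Finset.card_sdiff_of_subset hbox'sub, hbox, hbox']
    rw [Fintype.card_piFinset, Fintype.card_piFinset]
    simp only [Int.card_Icc]
    have h1 : ((m:ℤ) + 1 - -(m:ℤ)).toNat = 2 * m + 1 := by omega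
    have h2 : (((m:ℤ) - 1) + 1 - -((m:ℤ) - 1)).toNat = 2 * m - 1 := by omega
    rw [h1, h2]
    simp [Finset.prod_const, pow_succ]
  calc (u.filter (fun p => (Finset.univ.sup fun i => (p i).natAbs) = m)).card
      ≤ (box \ box').card := Finset.card_le_card hsub
    _ = (2 * m + 1) ^ 3 - (2 * m - 1) ^ 3 := hcard
    _ ≤ 26 * m ^ 2 := by
        obtain ⟨k, rfl⟩ : ∃ k, m = k + 1 := ⟨m - 1, by omega⟩
        have e : 2 * (k + 1) - 1 = 2 * k + 1 := by omega
        rw [e]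
        have : (2 * (k + 1) + 1) ^ 3 ≤ 26 * (k + 1) ^ 2 + (2 * k + 1) ^ 3 := by
          nlinarith
        omega

/-- The sup-norm of a lattice point. -/
def latSup (p : Fin 3 → ℤ) : ℕ := Finset.univ.sup fun i => (p i).natAbs

lemma shell_card' (u : Finset (Fin 3 → ℤ)) (m : ℕ) (hm : 1 ≤ m) :
    (u.filter (fun p => latSup p = m)).card ≤ 26 * m ^ 2 :=
  shell_card u m hm

lemma latSup_eq_zero {p : Fin 3 → ℤ} (h : latSup p = 0) : p = 0 := by
  funext i
  have := Finset.le_sup (f := fun j => (p j).natAbs) (Finset.mem_univ i)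
  rw [latSup] at h
  rw [h] at this
  simp only [Nat.le_zero] at this
  have : p i = 0 := Int.natAbs_eq_zero.mp this
  simpa using this

lemma lat_norm_sq (p : Fin 3 → ℤ) :
    ‖lat p‖ ^ 2 = ∑ i : Fin 3, (2 * Real.pi * ((p i : ℝ))) ^ 2 := by
  rw [EuclideanSpace.norm_eq, Real.sq_sqrt (by positivity)]
  congr 1
  funext i
  simp only [lat, PiLp.toLp_apply, Real.norm_eq_abs, sq_abs]

lemma latSup_sq_le_norm_sq (p : Fin 3 → ℤ) :
    ((latSup p : ℝ)) ^ 2 ≤ ‖lat p‖ ^ 2 := by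
  obtain ⟨i0, -, hi0⟩ := Finset.exists_mem_eq_sup Finset.univ
    ⟨0, Finset.mem_univ 0⟩ (fun i => (p i).natAbs)
  rw [lat_norm_sq]
  have h1 : ((latSup p : ℝ)) ^ 2 ≤ (2 * Real.pi * ((p i0 : ℝ))) ^ 2 := by
    have hcast : ((latSup p : ℝ)) ^ 2 = ((p i0 : ℝ)) ^ 2 := by
      rw [latSup, hi0]
      push_cast [Nat.cast_natAbs]
      rw [sq_abs]
    rw [hcast]
    have hpi2 : (1:ℝ) ≤ Real.pi ^ 2 := by nlinarith [Real.pi_gt_three]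
    nlinarith [mul_nonneg (sub_nonneg.mpr hpi2) (sq_nonneg ((p i0 : ℝ))), sq_nonneg ((p i0 : ℝ))]
  exact le_trans h1 (Finset.single_le_sum
    (f := fun i => (2 * Real.pi * ((p i : ℝ))) ^ 2)
    (fun i _ => sq_nonneg _) (Finset.mem_univ i0))

/-- Combined per-site estimate. -/
lemma term_le {K N x a b : ℝ} (hK : 0 < K) (hN : 1 ≤ N)
    (hx1 : 1 ≤ x) (ha : 0 ≤ a) (haK : a ≤ K) (hb : 0 ≤ b) (hbK : b ≤ K)
    (hab : |a - b| ≤ K * x / N ^ 2) :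
    |(a + x - Real.sqrt (x ^ 2 + 2 * x * a) - a ^ 2 / (2 * x))
      - (b + x - Real.sqrt (x ^ 2 + 2 * x * b) - b ^ 2 / (2 * x))|
      ≤ 4 * K ^ 3 / (x * (x + N ^ 2)) := by
  have hx0 : 0 < x := lt_of_lt_of_le one_pos hx1
  have hN0 : 0 < N := lt_of_lt_of_le one_pos hN
  rcases le_total x (N ^ 2) with hc | hc
  · have h1 := bogo_lip hx0 hK ⟨ha, haK⟩ ⟨hb, hbK⟩
    have h2 : 3 * K ^ 2 / (2 * x ^ 2) * |a - b|
        ≤ 3 * K ^ 2 / (2 * x ^ 2) * (K * x / N ^ 2) :=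
      mul_le_mul_of_nonneg_left hab (by positivity)
    have h3 : 3 * K ^ 2 / (2 * x ^ 2) * (K * x / N ^ 2) ≤ 4 * K ^ 3 / (x * (x + N ^ 2)) := by
      rw [div_mul_div_comm, div_le_div_iff₀ (by positivity) (by positivity)]
      nlinarith [mul_nonneg (mul_nonneg (pow_pos hK 3).le (sq_nonneg x))
        (sub_nonneg.mpr hc),
        mul_nonneg (mul_nonneg (pow_pos hK 3).le (sq_nonneg x)) (sq_nonneg N)]
    linarith
  · have c1 := bogo_crude hx0 ha
    have c2 := bogo_crude hx0 hb
    have habs : |(a + x - Real.sqrt (x ^ 2 + 2 * x * a) - a ^ 2 / (2 * x))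
        - (b + x - Real.sqrt (x ^ 2 + 2 * x * b) - b ^ 2 / (2 * x))|
        ≤ a ^ 3 / x ^ 2 + b ^ 3 / x ^ 2 := (abs_sub _ _).trans (add_le_add c1 c2)
    have h4 : a ^ 3 / x ^ 2 + b ^ 3 / x ^ 2 ≤ 2 * K ^ 3 / x ^ 2 := by
      have ha3 : a ^ 3 ≤ K ^ 3 := pow_le_pow_left₀ ha haK 3
      have hb3 : b ^ 3 ≤ K ^ 3 := pow_le_pow_left₀ hb hbK 3
      rw [← add_div, div_le_div_iff₀ (by positivity) (by positivity)]
      nlinarith [sq_nonneg x]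
    have h5 : 2 * K ^ 3 / x ^ 2 ≤ 4 * K ^ 3 / (x * (x + N ^ 2)) := by
      rw [div_le_div_iff₀ (by positivity) (by positivity)]
      nlinarith [mul_nonneg (mul_nonneg (pow_pos hK 3).le hx0.le) (sub_nonneg.mpr hc)]
    linarith

noncomputable def Gaux (K N : ℝ) (m : ℕ) : ℝ :=
  if m = 0 then 0 else 104 * K ^ 3 / ((m : ℝ) ^ 2 + N ^ 2)

lemma Gaux_nonneg {K N : ℝ} (hK : 0 < K) (m : ℕ) : 0 ≤ Gaux K N m := by
  rw [Gaux]
  split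
  · exact le_refl 0
  · positivity

lemma Gaux_succ (K N : ℝ) :
    (fun n : ℕ => Gaux K N (n + 1))
      = fun n : ℕ => 104 * K ^ 3 * (1 / (((n : ℝ) + 1) ^ 2 + N ^ 2)) := by
  funext n
  rw [Gaux, if_neg (Nat.succ_ne_zero n)]
  push_cast
  ring

lemma Gaux_summable (K N : ℝ) : Summable (Gaux K N) := by
  apply (summable_nat_add_iff 1).mp
  rw [Gaux_succ]
  exact (aux_summable N).mul_left _

lemma Gaux_tsum_le {K N : ℝ} (hK : 0 < K) (hN : 1 ≤ N) :
    (∑' m : ℕ, Gaux K N m) ≤ 312 * K ^ 3 / N := by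
  have hN0 : (0:ℝ) < N := lt_of_lt_of_le one_pos hN
  rw [← Summable.sum_add_tsum_nat_add 1 (Gaux_summable K N)]
  have h0 : ∑ i ∈ Finset.range 1, Gaux K N i = 0 := by
    simp [Gaux]
  rw [h0, zero_add]
  have : (∑' n : ℕ, Gaux K N (n + 1))
      = 104 * K ^ 3 * ∑' n : ℕ, 1 / (((n : ℝ) + 1) ^ 2 + N ^ 2) := by
    rw [Gaux_succ]
    exact tsum_mul_left
  rw [this]
  calc 104 * K ^ 3 * ∑' n : ℕ, 1 / (((n : ℝ) + 1) ^ 2 + N ^ 2)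
      ≤ 104 * K ^ 3 * (3 / N) :=
        mul_le_mul_of_nonneg_left (aux_tsum_le N hN) (by positivity)
    _ = 312 * K ^ 3 / N := by ring

/-- For every `K > 0` there exists `C > 0` such that for all `N ≥ 1`:
if `0 ≤ Φ(p) ≤ K` on `Λ*₊`, `0 ≤ Φ₀ ≤ K`, and `|Φ(p) − Φ₀| ≤ K|p|²/N²`, then the sum
over `p ∈ Λ*₊` of the absolute difference of the Bogoliubov energy summands
`Φ + |p|² − √(|p|⁴ + 2|p|²Φ) − Φ²/(2|p|²)` at `Φ(p)` and at `Φ₀` is at most `C/N`. -/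
theorem bogoliubov_energy_sum_comparison (K : ℝ) (hK : 0 < K) :
    ∃ C > 0, ∀ N : ℝ, 1 ≤ N → ∀ Φ : (Fin 3 → ℤ) → ℝ, ∀ Φ₀ : ℝ,
      (∀ p : Fin 3 → ℤ, p ≠ 0 → 0 ≤ Φ p) →
      (∀ p : Fin 3 → ℤ, p ≠ 0 → Φ p ≤ K) →
      0 ≤ Φ₀ → Φ₀ ≤ K →
      (∀ p : Fin 3 → ℤ, p ≠ 0 → |Φ p - Φ₀| ≤ K * ‖lat p‖ ^ 2 / N ^ 2) →
      (∑' p : Fin 3 → ℤ,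
          if p ≠ 0 then
            |(Φ p + ‖lat p‖ ^ 2 - Real.sqrt (‖lat p‖ ^ 4 + 2 * ‖lat p‖ ^ 2 * Φ p)
                - Φ p ^ 2 / (2 * ‖lat p‖ ^ 2))
              - (Φ₀ + ‖lat p‖ ^ 2 - Real.sqrt (‖lat p‖ ^ 4 + 2 * ‖lat p‖ ^ 2 * Φ₀)
                - Φ₀ ^ 2 / (2 * ‖lat p‖ ^ 2))|
          else 0)
        ≤ C / N := by
  classical
  refine ⟨312 * K ^ 3, by positivity, ?_⟩
  intro N hN Φ Φ₀ hΦ0 hΦK hΦ₀0 hΦ₀K hdiff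
  have hN0 : (0:ℝ) < N := lt_of_lt_of_le one_pos hN
  set H : ℕ → ℝ := fun m =>
    if m = 0 then 0 else 4 * K ^ 3 / ((m : ℝ) ^ 2 * ((m : ℝ) ^ 2 + N ^ 2)) with hHdef
  apply tsum_le_of_sum_le' (by positivity)
  intro u
  have hterm : ∀ p ∈ u,
      (if p ≠ 0 then
        |(Φ p + ‖lat p‖ ^ 2 - Real.sqrt (‖lat p‖ ^ 4 + 2 * ‖lat p‖ ^ 2 * Φ p)
            - Φ p ^ 2 / (2 * ‖lat p‖ ^ 2))
          - (Φ₀ + ‖lat p‖ ^ 2 - Real.sqrt (‖lat p‖ ^ 4 + 2 * ‖lat p‖ ^ 2 * Φ₀)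
            - Φ₀ ^ 2 / (2 * ‖lat p‖ ^ 2))|
        else 0) ≤ H (latSup p) := by
    intro p _
    by_cases hp : p = 0
    · subst hp
      rw [if_neg (by simp)]
      have h0 : latSup (0 : Fin 3 → ℤ) = 0 := by
        rw [latSup]
        simp
      simp [h0, hHdef]
    · rw [if_pos hp]
      set m := latSup p with hm
      have hm1 : 1 ≤ m := by
        rcases Nat.eq_zero_or_pos m with h | h
        · have h0 : latSup p = 0 := by rw [← hm]; exact h
          exact absurd (latSup_eq_zero h0) hp
        · exact h
      have hmx : ((m : ℝ)) ^ 2 ≤ ‖lat p‖ ^ 2 := latSup_sq_le_norm_sq p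
      have hm2 : (1:ℝ) ≤ ((m : ℝ)) ^ 2 := by
        have : (1:ℝ) ≤ (m : ℝ) := by exact_mod_cast hm1
        nlinarith
      have hx1 : 1 ≤ ‖lat p‖ ^ 2 := le_trans hm2 hmx
      have h4 : ‖lat p‖ ^ 4 = (‖lat p‖ ^ 2) ^ 2 := by ring
      rw [h4]
      have hstep := term_le hK hN hx1 (hΦ0 p hp) (hΦK p hp) hΦ₀0 hΦ₀K (hdiff p hp)
      refine hstep.trans ?_
      simp only [hHdef]
      rw [if_neg (by omega : ¬ m = 0)]
      have hmono : ((m : ℝ)) ^ 2 * (((m : ℝ)) ^ 2 + N ^ 2) ≤ ‖lat p‖ ^ 2 * (‖lat p‖ ^ 2 + N ^ 2) := by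
        nlinarith [sq_nonneg N, hmx, hm2]
      apply div_le_div_of_nonneg_left (by positivity) (by positivity) hmono
  have hHnonneg : ∀ m, 0 ≤ H m := by
    intro m
    rw [hHdef]
    dsimp only
    split
    · exact le_refl 0
    · next h =>
      have : (1:ℝ) ≤ (m:ℝ) := by exact_mod_cast Nat.one_le_iff_ne_zero.mpr h
      positivity
  have hcount : ∀ m ∈ u.image latSup,
      (u.filter (fun p => latSup p = m)).card • H m ≤ Gaux K N m := by
    intro m _
    by_cases hm0 : m = 0
    · subst hm0
      simp [hHdef, Gaux]
    · have hm1 : 1 ≤ m := Nat.one_le_iff_ne_zero.mpr hm0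
      have hcard := shell_card' u m hm1
      have hcardR : ((u.filter (fun p => latSup p = m)).card : ℝ) ≤ 26 * (m : ℝ) ^ 2 := by
        exact_mod_cast hcard
      rw [nsmul_eq_mul]
      have hmR : (1:ℝ) ≤ (m:ℝ) := by exact_mod_cast hm1
      calc ((u.filter (fun p => latSup p = m)).card : ℝ) * H m
          ≤ (26 * (m : ℝ) ^ 2) * H m :=
            mul_le_mul_of_nonneg_right hcardR (hHnonneg m)
        _ = Gaux K N m := by
            simp only [hHdef, Gaux, if_neg hm0]
            field_simp
            ring
  calc (∑ p ∈ u,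
        if p ≠ 0 then
          |(Φ p + ‖lat p‖ ^ 2 - Real.sqrt (‖lat p‖ ^ 4 + 2 * ‖lat p‖ ^ 2 * Φ p)
              - Φ p ^ 2 / (2 * ‖lat p‖ ^ 2))
            - (Φ₀ + ‖lat p‖ ^ 2 - Real.sqrt (‖lat p‖ ^ 4 + 2 * ‖lat p‖ ^ 2 * Φ₀)
              - Φ₀ ^ 2 / (2 * ‖lat p‖ ^ 2))|
          else 0)
      ≤ ∑ p ∈ u, H (latSup p) := Finset.sum_le_sum hterm
    _ = ∑ m ∈ u.image latSup, (u.filter (fun p => latSup p = m)).card • H m :=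
        Finset.sum_comp H latSup
    _ ≤ ∑ m ∈ u.image latSup, Gaux K N m := Finset.sum_le_sum hcount
    _ ≤ ∑' m : ℕ, Gaux K N m :=
        Summable.sum_le_tsum _ (fun m _ => Gaux_nonneg hK m) (Gaux_summable K N)
    _ ≤ 312 * K ^ 3 / N := Gaux_tsum_le hK hN
end

section
/- For all K₁, K₂ > 0 there exists a constant C > 0 such that the following holds for every real N ≥ 1: if W : Λ* → ℝ satisfies |W(p)| ≤ K₁ for all p, and η : Λ*₊ → ℝ satisfies |η(s)| ≤ K₂ |s|^{−2} for all s ∈ Λ*₊ and Σ_{s ∈ Λ*₊} |η(s)| ≤ K₂ N, then Σ_{v ∈ Λ*₊} sup_{r ∈ Λ*₊} ( N^{−1/2} Σ_{s ∈ Λ*₊, s ≠ −v} |W(r − s)| · |η(s)| · |η(s + v)| )² ≤ C. -/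
open scoped RealInnerProductSpace
open Real MeasureTheory

namespace AlphaAux
set_option maxHeartbeats 1600000

abbrev α3 := Fin 3 → ℤ

def M (k : α3) : ℕ := Finset.univ.sup fun i => (k i).natAbs

lemma natAbs_le_M (k : α3) (i : Fin 3) : (k i).natAbs ≤ M k :=
  Finset.le_sup (f := fun i => (k i).natAbs) (Finset.mem_univ i)

lemma M_le_iff {k : α3} {j : ℕ} : M k ≤ j ↔ ∀ i, (k i).natAbs ≤ j := by
  simp [M, Finset.sup_le_iff]

lemma M_zero : M 0 = 0 := by simp [M]

lemma one_le_M {k : α3} (h : k ≠ 0) : 1 ≤ M k := by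
  rcases Nat.eq_zero_or_pos (M k) with h0 | h1
  · exfalso; apply h; funext i
    have := natAbs_le_M k i
    have : (k i).natAbs = 0 := by omega
    simpa using Int.natAbs_eq_zero.mp this
  · exact h1

lemma M_add_le (x y : α3) : M (x + y) ≤ M x + M y := by
  rw [M_le_iff]
  intro i
  have h1 := natAbs_le_M x i
  have h2 := natAbs_le_M y i
  have h3 := Int.natAbs_add_le (x i) (y i)
  have : (x + y) i = x i + y i := rfl
  omega

lemma M_neg (k : α3) : M (-k) = M k := by simp [M]

noncomputable def ball (j : ℕ) : Finset α3 := Finset.Icc (fun _ => -(j : ℤ)) (fun _ => (j : ℤ))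

lemma mem_ball {k : α3} {j : ℕ} : k ∈ ball j ↔ M k ≤ j := by
  rw [ball, Finset.mem_Icc, Pi.le_def, Pi.le_def, M_le_iff]
  constructor
  · rintro ⟨h1, h2⟩ i; have := h1 i; have := h2 i; omega
  · intro h; exact ⟨fun i => by have := h i; omega, fun i => by have := h i; omega⟩

lemma card_ball (j : ℕ) : (ball j).card = (2 * j + 1) ^ 3 := by
  rw [ball, Pi.card_Icc]
  have : ∀ i : Fin 3, (Finset.Icc (-(j:ℤ)) (j:ℤ)).card = 2 * j + 1 := by
    intro i; rw [Int.card_Icc]; omega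
  simp only [Int.card_Icc]
  rw [Finset.prod_const]
  norm_num
  omega


lemma card_layer_le {j : ℕ} (hj : 1 ≤ j) (F : Finset α3) (hF : ∀ k ∈ F, M k = j) :
    F.card ≤ 26 * j ^ 2 := by
  classical
  have hsub : F ⊆ ball j \ ball (j - 1) := by
    intro k hk
    have h := hF k hk
    rw [Finset.mem_sdiff, mem_ball, mem_ball]
    omega
  have hball : ball (j - 1) ⊆ ball j := by
    intro k hk; rw [mem_ball] at *; omega
  have h1 := Finset.card_le_card hsub
  rw [Finset.card_sdiff_of_subset hball, card_ball, card_ball] at h1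
  obtain ⟨n, rfl⟩ : ∃ n, j = n + 1 := ⟨j - 1, by omega⟩
  have h2 : (2 * (n + 1) + 1) ^ 3 ≤ (2 * (n + 1 - 1) + 1) ^ 3 + 26 * (n + 1) ^ 2 := by
    have : n + 1 - 1 = n := by omega
    rw [this]
    nlinarith [Nat.zero_le n]
  omega

lemma sum_layers_le (F : Finset α3) (c : ℕ → ℝ) (hc : ∀ j, 0 ≤ c j)
    (h0 : ∀ k ∈ F, k ≠ (0 : α3)) (J : ℕ) (hJ : ∀ k ∈ F, M k ≤ J) :
    ∑ k ∈ F, c (M k) ≤ ∑ j ∈ Finset.Icc 1 J, 26 * (j : ℝ) ^ 2 * c j := by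
  classical
  rw [Finset.sum_comp]
  have himg : F.image M ⊆ Finset.Icc 1 J := by
    intro j hj
    obtain ⟨k, hk, rfl⟩ := Finset.mem_image.mp hj
    exact Finset.mem_Icc.mpr ⟨one_le_M (h0 k hk), hJ k hk⟩
  refine le_trans (Finset.sum_le_sum ?_) (Finset.sum_le_sum_of_subset_of_nonneg himg ?_)
  · intro j hj
    obtain ⟨k, hk, rfl⟩ := Finset.mem_image.mp hj
    have hcard : ({a ∈ F | M a = M k} : Finset α3).card ≤ 26 * (M k) ^ 2 :=
      card_layer_le (one_le_M (h0 k hk)) _ (fun x hx => (Finset.mem_filter.mp hx).2)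
    rw [nsmul_eq_mul]
    calc (({a ∈ F | M a = M k} : Finset α3).card : ℝ) * c (M k)
        ≤ ((26 * (M k) ^ 2 : ℕ) : ℝ) * c (M k) := by
          exact mul_le_mul_of_nonneg_right (by exact_mod_cast hcard) (hc _)
      _ = 26 * ((M k : ℝ)) ^ 2 * c (M k) := by push_cast; ring
  · intro j _ _; exact mul_nonneg (by positivity) (hc j)

lemma sum_Icc_inv_sq_le (j₀ J : ℕ) (h : 1 ≤ j₀) :
    ∑ j ∈ Finset.Icc j₀ J, (1 : ℝ) / (j : ℝ) ^ 2 ≤ 2 / (j₀ : ℝ) := by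
  have hj₀ : (1 : ℝ) ≤ (j₀ : ℝ) := by exact_mod_cast h
  have hj₀0 : (0 : ℝ) < (j₀ : ℝ) := by linarith
  rcases le_or_gt j₀ J with hJ | hJ
  · have key : ∀ K, j₀ ≤ K → ∑ j ∈ Finset.Icc j₀ K, (1 : ℝ) / (j : ℝ) ^ 2
        ≤ 2 / (j₀ : ℝ) - 1 / (K : ℝ) := by
      intro K hK
      induction K, hK using Nat.le_induction with
      | base =>
        rw [Finset.Icc_self, Finset.sum_singleton]
        have : 2 / (j₀ : ℝ) - 1 / (j₀ : ℝ) = 1 / (j₀ : ℝ) := by ring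
        rw [this, div_le_div_iff₀ (by positivity) hj₀0]
        nlinarith
      | succ n hn ih =>
        rw [Finset.sum_Icc_succ_top (by omega)]
        have hn1 : (1 : ℝ) ≤ (n : ℝ) := by
          have : 1 ≤ n := le_trans h hn
          exact_mod_cast this
        have hnp : (0 : ℝ) < (n : ℝ) := by linarith
        have hnp1 : (0 : ℝ) < ((n : ℝ) + 1) := by linarith
        have hcast : ((n + 1 : ℕ) : ℝ) = (n : ℝ) + 1 := by push_cast; ring
        rw [hcast]
        have hstep : 1 / ((n : ℝ) + 1) ^ 2 ≤ 1 / (n : ℝ) - 1 / ((n : ℝ) + 1) := by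
          rw [div_sub_div _ _ (ne_of_gt hnp) (ne_of_gt hnp1), div_le_div_iff₀ (by positivity) (by positivity)]
          ring_nf
          nlinarith
        linarith
    have := key J hJ
    have hJ0 : (0 : ℝ) < (J : ℝ) := by
      have : 1 ≤ J := le_trans h hJ
      have : (1:ℝ) ≤ (J:ℝ) := by exact_mod_cast this
      linarith
    have : 0 ≤ 1 / (J : ℝ) := by positivity
    linarith
  · rw [Finset.Icc_eq_empty (by omega)]
    simp
    positivity


lemma sum_ball_inv_sq_le (R : ℝ) (hR : 1 ≤ R) (F : Finset α3)
    (hF : ∀ k ∈ F, k ≠ (0 : α3) ∧ ((M k : ℝ) ≤ R)) :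
    ∑ k ∈ F, (1 : ℝ) / ((M k : ℝ)) ^ 2 ≤ 26 * R := by
  have h1 : ∑ k ∈ F, (1 : ℝ) / ((M k : ℝ)) ^ 2
      = ∑ k ∈ F, (fun j : ℕ => (1 : ℝ) / (j : ℝ) ^ 2) (M k) := rfl
  rw [h1]
  have hle := sum_layers_le F (fun j : ℕ => (1 : ℝ) / (j : ℝ) ^ 2) (fun j => by positivity)
    (fun k hk => (hF k hk).1) (Nat.floor R) (fun k hk => Nat.le_floor (hF k hk).2)
  refine le_trans hle ?_
  have heq : ∀ j ∈ Finset.Icc 1 (Nat.floor R),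
      26 * (j : ℝ) ^ 2 * ((1 : ℝ) / (j : ℝ) ^ 2) = 26 := by
    intro j hj
    have hj1 : 1 ≤ j := (Finset.mem_Icc.mp hj).1
    have : ((j : ℝ)) ^ 2 ≠ 0 := by positivity
    field_simp
  rw [Finset.sum_congr rfl heq, Finset.sum_const, Nat.card_Icc]
  have : ((Nat.floor R + 1 - 1 : ℕ) : ℝ) ≤ R := by
    simp only [Nat.add_sub_cancel]
    exact Nat.floor_le (by linarith)
  rw [nsmul_eq_mul]
  nlinarith [this]

lemma sum_tail_inv_pow4_le (j₀ : ℕ) (h : 1 ≤ j₀) (F : Finset α3)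
    (hF : ∀ k ∈ F, k ≠ (0 : α3) ∧ j₀ ≤ M k) :
    ∑ k ∈ F, (1 : ℝ) / ((M k : ℝ)) ^ 4 ≤ 52 / (j₀ : ℝ) := by
  classical
  have hre : ∑ k ∈ F, (1 : ℝ) / ((M k : ℝ)) ^ 4
      = ∑ k ∈ F, (fun j : ℕ => if j₀ ≤ j then (1 : ℝ) / (j : ℝ) ^ 4 else 0) (M k) :=
    Finset.sum_congr rfl (fun k hk => by simp [if_pos (hF k hk).2])
  rw [hre]
  set J := F.sup M with hJdef
  have hc : ∀ j : ℕ, (0:ℝ) ≤ (fun j : ℕ => if j₀ ≤ j then (1 : ℝ) / (j : ℝ) ^ 4 else 0) j := by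
    intro j
    by_cases hj : j₀ ≤ j
    · simpa [hj] using (by positivity : (0:ℝ) ≤ 1 / (j:ℝ)^4)
    · simp [hj]
  have hle := sum_layers_le F _ hc (fun k hk => (hF k hk).1) J (fun k hk => Finset.le_sup hk)
  refine le_trans hle ?_
  have heq : ∀ j ∈ Finset.Icc 1 J,
      26 * (j : ℝ) ^ 2 * ((fun j : ℕ => if j₀ ≤ j then (1 : ℝ) / (j : ℝ) ^ 4 else 0) j)
      = if j₀ ≤ j then 26 * ((1 : ℝ) / (j : ℝ) ^ 2) else 0 := by
    intro j hj
    have hj1 : 1 ≤ j := (Finset.mem_Icc.mp hj).1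
    have hjne : ((j : ℝ)) ≠ 0 := by positivity
    dsimp only
    split
    · field_simp
    · ring
  rw [Finset.sum_congr rfl heq, ← Finset.sum_filter]
  have hfil : (Finset.Icc 1 J).filter (fun j => j₀ ≤ j) = Finset.Icc j₀ J := by
    ext j
    simp only [Finset.mem_filter, Finset.mem_Icc]
    omega
  rw [hfil, ← Finset.mul_sum]
  have := sum_Icc_inv_sq_le j₀ J h
  have h2 : (26:ℝ) * (2 / (j₀:ℝ)) = 52 / (j₀:ℝ) := by ring
  nlinarith [this]


lemma M_sq_le (s : α3) : ((M s : ℝ)) ^ 2 ≤ ‖lat s‖ ^ 2 := by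
  obtain ⟨i, -, hi⟩ := Finset.exists_mem_eq_sup (Finset.univ : Finset (Fin 3))
    Finset.univ_nonempty (fun i => (s i).natAbs)
  have hnorm : ‖lat s‖ ^ 2 = ∑ j : Fin 3, ‖(2 : ℝ) * Real.pi * (s j)‖ ^ 2 := by
    rw [EuclideanSpace.norm_eq]
    rw [Real.sq_sqrt (by positivity)]
    rfl
  rw [hnorm]
  have hterm : ((M s : ℝ)) ^ 2 ≤ ‖(2 : ℝ) * Real.pi * (s i)‖ ^ 2 := by
    have hM : (M s : ℝ) = |(s i : ℝ)| := by
      rw [M, hi]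
      rw [Nat.cast_natAbs]
      push_cast
      rfl
    rw [hM, norm_eq_abs, abs_mul, mul_pow, sq_abs]
    have hpi : (1 : ℝ) ≤ |2 * Real.pi| := by
      rw [abs_of_pos (by positivity)]
      nlinarith [Real.pi_gt_three]
    have h1 : (1:ℝ) ≤ |2 * Real.pi| ^ 2 := by nlinarith
    nlinarith [sq_nonneg ((s i : ℝ))]
  refine le_trans hterm ?_
  exact Finset.single_le_sum (f := fun j => ‖(2 : ℝ) * Real.pi * (s j)‖ ^ 2)
    (fun j _ => by positivity) (Finset.mem_univ i)

lemma tsum_aux {f : α3 → ℝ} (hf : ∀ k, 0 ≤ f k) {B : ℝ}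
    (hB : ∀ F : Finset α3, ∑ k ∈ F, f k ≤ B) :
    Summable f ∧ ∑' k, f k ≤ B := by
  have hs := summable_of_sum_le hf hB
  exact ⟨hs, hs.tsum_le_of_sum_le hB⟩


lemma decay (K₂ : ℝ) (hK₂ : 0 < K₂) (a : α3 → ℝ) (ha0 : ∀ s, 0 ≤ a s)
    (haM : ∀ s : α3, s ≠ 0 → a s ≤ K₂ / ((M s : ℝ)) ^ 2) (v : α3) (hv : v ≠ 0)
    (hts : Summable (fun s : α3 => if s ≠ 0 ∧ s ≠ -v then a s * a (s + v) else 0)) :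
    (∑' s : α3, if s ≠ 0 ∧ s ≠ -v then a s * a (s + v) else 0)
      ≤ 416 * K₂ ^ 2 / ((M v : ℝ)) := by
  classical
  set m : ℕ := M v with hm_def
  have hm : 1 ≤ m := one_le_M hv
  have hmR : (1 : ℝ) ≤ (m : ℝ) := by exact_mod_cast hm
  have hmR0 : (0 : ℝ) < (m : ℝ) := by linarith
  set h₁ : α3 → ℝ := fun k =>
    if k ≠ 0 ∧ M k ≤ m then (4 * K₂ / (m : ℝ) ^ 2) * (K₂ / ((M k : ℝ)) ^ 2) else 0 with h₁_def
  set p : α3 → ℝ := fun k =>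
    if k ≠ 0 ∧ m ≤ 2 * M k then (K₂ / ((M k : ℝ)) ^ 2) ^ 2 else 0 with hp_def
  have h₁0 : ∀ k, 0 ≤ h₁ k := by
    intro k; rw [h₁_def]; dsimp only; split
    · positivity
    · exact le_rfl
  have hp0 : ∀ k, 0 ≤ p k := by
    intro k; rw [hp_def]; dsimp only; split
    · positivity
    · exact le_rfl
  -- summability and bound for h₁
  have h₁vanish : ∀ k ∉ ball m, h₁ k = 0 := by
    intro k hk
    rw [h₁_def]; dsimp only
    rw [if_neg]
    intro hcond
    exact hk (mem_ball.mpr hcond.2)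
  have h₁summable : Summable h₁ := summable_of_ne_finset_zero h₁vanish
  have h₁tsum : ∑' k, h₁ k ≤ 104 * K₂ ^ 2 / (m : ℝ) := by
    rw [tsum_eq_sum h₁vanish]
    set F' := (ball m).filter (fun k => k ≠ (0 : α3)) with hF'
    have hsub : ∑ k ∈ ball m, h₁ k = ∑ k ∈ F', h₁ k := by
      refine (Finset.sum_subset (Finset.filter_subset _ _) ?_).symm
      intro k hk hnk
      have : k = 0 := by
        by_contra h0
        exact hnk (Finset.mem_filter.mpr ⟨hk, h0⟩)
      rw [h₁_def]; dsimp only; rw [if_neg]; tauto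
    rw [hsub]
    have heach : ∀ k ∈ F', h₁ k = (4 * K₂ * K₂ / (m : ℝ) ^ 2) * ((1 : ℝ) / ((M k : ℝ)) ^ 2) := by
      intro k hk
      obtain ⟨hkball, hk0⟩ := Finset.mem_filter.mp hk
      rw [h₁_def]; dsimp only
      rw [if_pos ⟨hk0, mem_ball.mp hkball⟩]
      ring
    rw [Finset.sum_congr rfl heach, ← Finset.mul_sum]
    have hsumF : ∑ k ∈ F', (1 : ℝ) / ((M k : ℝ)) ^ 2 ≤ 26 * (m : ℝ) := by
      refine sum_ball_inv_sq_le (m : ℝ) hmR F' ?_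
      intro k hk
      obtain ⟨hkball, hk0⟩ := Finset.mem_filter.mp hk
      exact ⟨hk0, by exact_mod_cast mem_ball.mp hkball⟩
    have hcoef : (0 : ℝ) ≤ 4 * K₂ * K₂ / (m : ℝ) ^ 2 := by positivity
    calc (4 * K₂ * K₂ / (m : ℝ) ^ 2) * ∑ k ∈ F', (1 : ℝ) / ((M k : ℝ)) ^ 2
        ≤ (4 * K₂ * K₂ / (m : ℝ) ^ 2) * (26 * (m : ℝ)) := by
          exact mul_le_mul_of_nonneg_left hsumF hcoef
      _ = 104 * K₂ ^ 2 / (m : ℝ) := by field_simp; ring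
  -- summability and bound for p
  have hj₀ : 1 ≤ (m + 1) / 2 := by omega
  have hptsum' : ∀ F : Finset α3, ∑ k ∈ F, p k ≤ 104 * K₂ ^ 2 / (m : ℝ) := by
    intro F
    set F' := F.filter (fun k => k ≠ (0 : α3) ∧ m ≤ 2 * M k) with hF'
    have hsub : ∑ k ∈ F, p k = ∑ k ∈ F', p k := by
      refine (Finset.sum_subset (Finset.filter_subset _ _) ?_).symm
      intro k hk hnk
      rw [hp_def]; dsimp only; rw [if_neg]
      intro hcond
      exact hnk (Finset.mem_filter.mpr ⟨hk, hcond⟩)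
    rw [hsub]
    have heach : ∀ k ∈ F', p k = (K₂ * K₂) * ((1 : ℝ) / ((M k : ℝ)) ^ 4) := by
      intro k hk
      obtain ⟨-, hcond⟩ := Finset.mem_filter.mp hk
      rw [hp_def]; dsimp only; rw [if_pos hcond]; ring
    rw [Finset.sum_congr rfl heach, ← Finset.mul_sum]
    have hsumF : ∑ k ∈ F', (1 : ℝ) / ((M k : ℝ)) ^ 4 ≤ 52 / (((m + 1) / 2 : ℕ) : ℝ) := by
      refine sum_tail_inv_pow4_le ((m + 1) / 2) hj₀ F' ?_
      intro k hk
      obtain ⟨-, hk0, hkm⟩ := Finset.mem_filter.mp hk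
      exact ⟨hk0, by omega⟩
    have hj₀R : (0 : ℝ) < (((m + 1) / 2 : ℕ) : ℝ) := by
      have : (1 : ℝ) ≤ (((m + 1) / 2 : ℕ) : ℝ) := by exact_mod_cast hj₀
      linarith
    have hmle : (m : ℝ) ≤ 2 * (((m + 1) / 2 : ℕ) : ℝ) := by
      have : m ≤ 2 * ((m + 1) / 2) := by omega
      exact_mod_cast this
    have h52 : 52 / (((m + 1) / 2 : ℕ) : ℝ) ≤ 104 / (m : ℝ) := by
      rw [div_le_div_iff₀ hj₀R hmR0]
      nlinarith
    calc (K₂ * K₂) * ∑ k ∈ F', (1 : ℝ) / ((M k : ℝ)) ^ 4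
        ≤ (K₂ * K₂) * (104 / (m : ℝ)) := by
          refine mul_le_mul_of_nonneg_left (le_trans hsumF h52) (by positivity)
      _ = 104 * K₂ ^ 2 / (m : ℝ) := by ring
  obtain ⟨hpsummable, hptsum⟩ := tsum_aux hp0 hptsum'
  -- translated versions
  have h₁summable' : Summable (fun s : α3 => h₁ (s + v)) := by
    have := (Equiv.addRight v).summable_iff (f := h₁)
    exact this.mpr h₁summable
  have hpsummable' : Summable (fun s : α3 => p (s + v)) := by
    have := (Equiv.addRight v).summable_iff (f := p)
    exact this.mpr hpsummable
  have h₁tsum' : ∑' s : α3, h₁ (s + v) ≤ 104 * K₂ ^ 2 / (m : ℝ) := by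
    have := (Equiv.addRight v).tsum_eq h₁
    simp only [Equiv.coe_addRight] at this
    rw [this]; exact h₁tsum
  have hptsum'' : ∑' s : α3, p (s + v) ≤ 104 * K₂ ^ 2 / (m : ℝ) := by
    have := (Equiv.addRight v).tsum_eq p
    simp only [Equiv.coe_addRight] at this
    rw [this]; exact hptsum
  -- pointwise bound
  have hpt : ∀ s : α3, (if s ≠ 0 ∧ s ≠ -v then a s * a (s + v) else 0)
      ≤ h₁ s + (h₁ (s + v) + (p s + p (s + v))) := by
    intro s
    by_cases hc : s ≠ 0 ∧ s ≠ -v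
    · obtain ⟨hs0, hsv⟩ := hc
      have hsv0 : s + v ≠ 0 := by
        intro h
        exact hsv (eq_neg_of_add_eq_zero_left h)
      rw [if_pos ⟨hs0, hsv⟩]
      have htri : m ≤ M (s + v) + M s := by
        have h1 := M_add_le (s + v) (-s)
        rw [M_neg] at h1
        have h2 : (s + v) + (-s) = v := by abel
        rw [h2] at h1
        exact h1
      have hMs1 : 1 ≤ M s := one_le_M hs0
      have hMsv1 : 1 ≤ M (s + v) := one_le_M hsv0
      have hMsR : (0:ℝ) < ((M s : ℝ)) := by exact_mod_cast hMs1
      have hMsvR : (0:ℝ) < ((M (s+v) : ℝ)) := by exact_mod_cast hMsv1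
      by_cases hA : 2 * M s < m
      · have hBig : m < 2 * M (s + v) := by omega
        have hBigR : (m : ℝ) ≤ 2 * ((M (s+v) : ℝ)) := by exact_mod_cast hBig.le
        have hb : a (s + v) ≤ 4 * K₂ / (m : ℝ) ^ 2 := by
          refine le_trans (haM _ hsv0) ?_
          rw [div_le_div_iff₀ (by positivity) (by positivity)]
          have hsq : (m:ℝ)^2 ≤ 4 * ((M (s+v) : ℝ))^2 := by nlinarith [hBigR, hMsvR]
          nlinarith [hsq, hK₂]
        have hbound : a s * a (s + v) ≤ h₁ s := by
          have : h₁ s = (4 * K₂ / (m : ℝ) ^ 2) * (K₂ / ((M s : ℝ)) ^ 2) := by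
            rw [h₁_def]; dsimp only; rw [if_pos ⟨hs0, by omega⟩]
          rw [this]
          calc a s * a (s + v) ≤ (K₂ / ((M s : ℝ)) ^ 2) * (4 * K₂ / (m : ℝ) ^ 2) :=
                mul_le_mul (haM s hs0) hb (ha0 _) (by positivity)
            _ = (4 * K₂ / (m : ℝ) ^ 2) * (K₂ / ((M s : ℝ)) ^ 2) := by ring
        have := h₁0 (s + v); have := hp0 s; have := hp0 (s + v)
        linarith
      · by_cases hB : 2 * M (s + v) < m
        · have hBig : m < 2 * M s := by omega
          have hBigR : (m : ℝ) ≤ 2 * ((M s : ℝ)) := by exact_mod_cast hBig.le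
          have hb : a s ≤ 4 * K₂ / (m : ℝ) ^ 2 := by
            refine le_trans (haM _ hs0) ?_
            rw [div_le_div_iff₀ (by positivity) (by positivity)]
            have hsq : (m:ℝ)^2 ≤ 4 * ((M s : ℝ))^2 := by nlinarith [hBigR, hMsR]
            nlinarith [hsq, hK₂]
          have hbound : a s * a (s + v) ≤ h₁ (s + v) := by
            have : h₁ (s + v) = (4 * K₂ / (m : ℝ) ^ 2) * (K₂ / ((M (s + v) : ℝ)) ^ 2) := by
              rw [h₁_def]; dsimp only; rw [if_pos ⟨hsv0, by omega⟩]
            rw [this]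
            exact mul_le_mul hb (haM _ hsv0) (ha0 _) (by positivity)
          have := h₁0 s; have := hp0 s; have := hp0 (s + v)
          linarith
        · have hps : p s = (K₂ / ((M s : ℝ)) ^ 2) ^ 2 := by
            rw [hp_def]; dsimp only; rw [if_pos ⟨hs0, by omega⟩]
          have hpsv : p (s + v) = (K₂ / ((M (s + v) : ℝ)) ^ 2) ^ 2 := by
            rw [hp_def]; dsimp only; rw [if_pos ⟨hsv0, by omega⟩]
          set A := K₂ / ((M s : ℝ)) ^ 2 with hA_def
          set B := K₂ / ((M (s + v) : ℝ)) ^ 2 with hB_def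
          have hA0 : 0 ≤ A := by positivity
          have hB0 : 0 ≤ B := by positivity
          have h1 : a s * a (s + v) ≤ A * B :=
            mul_le_mul (haM s hs0) (haM _ hsv0) (ha0 _) hA0
          have h2 : A * B ≤ A ^ 2 + B ^ 2 := by nlinarith [sq_nonneg (A - B)]
          have := h₁0 s; have := h₁0 (s + v)
          rw [hps, hpsv]
          linarith
    · rw [if_neg hc]
      have := h₁0 s; have := h₁0 (s + v); have := hp0 s; have := hp0 (s + v)
      linarith
  -- assemble
  have hsum4 : Summable (fun s : α3 => h₁ s + (h₁ (s + v) + (p s + p (s + v)))) :=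
    h₁summable.add (h₁summable'.add (hpsummable.add hpsummable'))
  have htot := Summable.tsum_le_tsum hpt hts hsum4
  rw [Summable.tsum_add h₁summable (h₁summable'.add (hpsummable.add hpsummable')),
      Summable.tsum_add h₁summable' (hpsummable.add hpsummable'),
      Summable.tsum_add hpsummable hpsummable'] at htot
  have : (104 * K₂ ^ 2 / (m : ℝ)) + ((104 * K₂ ^ 2 / (m : ℝ)) + ((104 * K₂ ^ 2 / (m : ℝ)) + (104 * K₂ ^ 2 / (m : ℝ)))) = 416 * K₂ ^ 2 / (m : ℝ) := by ring
  linarith [htot, h₁tsum, h₁tsum', hptsum, hptsum'']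


end AlphaAux

open AlphaAux in
set_option maxHeartbeats 1600000 in
/-- For all `K₁, K₂ > 0` there exists `C > 0` such that for all
`N ≥ 1`: if `|W(p)| ≤ K₁` on `Λ*`, `|η(s)| ≤ K₂|s|^{−2}` on `Λ*₊`, and
`Σ_{s ∈ Λ*₊} |η(s)| ≤ K₂N`, then
`Σ_{v ∈ Λ*₊} sup_{r ∈ Λ*₊} ( N^{−1/2} Σ_{s ∈ Λ*₊, s ≠ −v} |W(r−s)||η(s)||η(s+v)| )² ≤ C`. -/
theorem alpha_coefficient_square_sum_bound (K₁ K₂ : ℝ) (hK₁ : 0 < K₁) (hK₂ : 0 < K₂) :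
    ∃ C > 0, ∀ N : ℝ, 1 ≤ N → ∀ W η : (Fin 3 → ℤ) → ℝ,
      (∀ p : Fin 3 → ℤ, |W p| ≤ K₁) →
      (∀ s : Fin 3 → ℤ, s ≠ 0 → |η s| ≤ K₂ / ‖lat s‖ ^ 2) →
      Summable (fun s : Fin 3 → ℤ => if s ≠ 0 then |η s| else 0) →
      (∑' s : Fin 3 → ℤ, if s ≠ 0 then |η s| else 0) ≤ K₂ * N →
      (∑' v : Fin 3 → ℤ,
          if v ≠ 0 then
            (⨆ r : {r : Fin 3 → ℤ // r ≠ 0},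
                N ^ (-(1 : ℝ) / 2) *
                  ∑' s : Fin 3 → ℤ,
                    if s ≠ 0 ∧ s ≠ -v then |W (r.1 - s)| * |η s| * |η (s + v)| else 0) ^ 2
          else 0)
        ≤ C := by
  classical
  refine ⟨4499872 * K₁ ^ 2 * K₂ ^ 4, by positivity, ?_⟩
  intro N hN W η hW hη hsum hsumN
  have hN0 : (0 : ℝ) < N := lt_of_lt_of_le one_pos hN
  set a : α3 → ℝ := fun s => if s ≠ 0 then |η s| else 0 with ha_def
  have ha0 : ∀ s, 0 ≤ a s := by
    intro s; rw [ha_def]; dsimp only; split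
    · exact abs_nonneg _
    · exact le_rfl
  have haM : ∀ s : α3, s ≠ 0 → a s ≤ K₂ / ((M s : ℝ)) ^ 2 := by
    intro s hs
    have hM1 : (1 : ℝ) ≤ (M s : ℝ) := by exact_mod_cast one_le_M hs
    have : a s = |η s| := by rw [ha_def]; dsimp only; rw [if_pos hs]
    rw [this]
    refine le_trans (hη s hs) ?_
    exact div_le_div_of_nonneg_left hK₂.le (by positivity) (M_sq_le s)
  have haK : ∀ s, a s ≤ K₂ := by
    intro s
    by_cases hs : s = 0
    · rw [hs, ha_def]; dsimp only; rw [if_neg (by simp)]; exact hK₂.le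
    · refine le_trans (haM s hs) ?_
      have hM1 : (1 : ℝ) ≤ (M s : ℝ) := by exact_mod_cast one_le_M hs
      exact div_le_self hK₂.le (by nlinarith)
  -- summabilities
  have hcore : ∀ v : α3, Summable (fun s => a s * a (s + v)) := by
    intro v
    refine Summable.of_nonneg_of_le (fun s => mul_nonneg (ha0 s) (ha0 _)) (fun s => ?_)
      (hsum.mul_right K₂)
    exact mul_le_mul_of_nonneg_left (haK (s + v)) (ha0 s)
  have ht0 : ∀ (v s : α3), 0 ≤ (if s ≠ 0 ∧ s ≠ -v then a s * a (s + v) else 0) := by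
    intro v s; split
    · exact mul_nonneg (ha0 s) (ha0 _)
    · exact le_rfl
  have ht_le : ∀ (v s : α3), (if s ≠ 0 ∧ s ≠ -v then a s * a (s + v) else 0) ≤ a s * a (s + v) := by
    intro v s; split
    · exact le_rfl
    · exact mul_nonneg (ha0 s) (ha0 _)
  have hts : ∀ v : α3, Summable (fun s => if s ≠ 0 ∧ s ≠ -v then a s * a (s + v) else 0) :=
    fun v => Summable.of_nonneg_of_le (ht0 v) (ht_le v) (hcore v)
  set g : α3 → ℝ := fun v => ∑' s : α3, (if s ≠ 0 ∧ s ≠ -v then a s * a (s + v) else 0) with hg_def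
  have hg0 : ∀ v, 0 ≤ g v := fun v => tsum_nonneg (ht0 v)
  set P : α3 → ℝ := fun v => ∑' s : α3, a s * a (s + v) with hP_def
  have hP0 : ∀ v, 0 ≤ P v := fun v => tsum_nonneg (fun s => mul_nonneg (ha0 s) (ha0 _))
  have hgle : ∀ v, g v ≤ P v := fun v => Summable.tsum_le_tsum (ht_le v) (hts v) (hcore v)
  have hdecay : ∀ v : α3, v ≠ 0 → g v ≤ 416 * K₂ ^ 2 / ((M v : ℝ)) :=
    fun v hv => decay K₂ hK₂ a ha0 haM v hv (hts v)
  -- Fubini for P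
  have hf2 : Summable (fun q : α3 × α3 => a q.1 * a (q.1 + q.2)) := by
    rw [summable_prod_of_nonneg (fun q => mul_nonneg (ha0 _) (ha0 _))]
    constructor
    · intro s
      have h1 : Summable (fun v : α3 => a (s + v)) := by
        have := (Equiv.addLeft s).summable_iff (f := a)
        exact this.mpr hsum
      exact h1.mul_left (a s)
    · have heq : (fun s : α3 => ∑' v : α3, a s * a (s + v))
          = fun s : α3 => a s * (∑' u : α3, a u) := by
        funext s
        rw [tsum_mul_left]
        congr 1
        have := (Equiv.addLeft s).tsum_eq a
        simpa using this
      rw [heq]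
      exact hsum.mul_right _
  have hswap : Summable (fun q : α3 × α3 => a q.2 * a (q.2 + q.1)) := hf2.prod_symm
  have h3 := (summable_prod_of_nonneg
    (f := fun q : α3 × α3 => a q.2 * a (q.2 + q.1))
    (fun q => mul_nonneg (ha0 _) (ha0 _))).mp hswap
  have hPsummable : Summable P := by
    have := h3.2
    exact this
  have hPsum : ∑' v, P v ≤ K₂ ^ 2 * N ^ 2 := by
    have e1 : ∑' v, P v = ∑' q : α3 × α3, a q.2 * a (q.2 + q.1) :=
      (Summable.tsum_prod' hswap h3.1).symm
    have e2 : ∑' q : α3 × α3, a q.2 * a (q.2 + q.1)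
        = ∑' q : α3 × α3, a q.1 * a (q.1 + q.2) := by
      have := (Equiv.prodComm α3 α3).tsum_eq (fun q : α3 × α3 => a q.1 * a (q.1 + q.2))
      simpa using this
    have e3 : ∑' q : α3 × α3, a q.1 * a (q.1 + q.2)
        = ∑' s : α3, ∑' v : α3, a s * a (s + v) := by
      refine Summable.tsum_prod' hf2 (fun s => ?_)
      have h1 : Summable (fun v : α3 => a (s + v)) := by
        have := (Equiv.addLeft s).summable_iff (f := a)
        exact this.mpr hsum
      exact h1.mul_left (a s)
    have e4 : ∑' s : α3, ∑' v : α3, a s * a (s + v) = (∑' s : α3, a s) * (∑' s : α3, a s) := by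
      have heq : (fun s : α3 => ∑' v : α3, a s * a (s + v))
          = fun s : α3 => a s * (∑' u : α3, a u) := by
        funext s
        rw [tsum_mul_left]
        congr 1
        have := (Equiv.addLeft s).tsum_eq a
        simpa using this
      rw [heq, tsum_mul_right]
    have hT0 : 0 ≤ ∑' s : α3, a s := tsum_nonneg ha0
    rw [e1, e2, e3, e4]
    nlinarith [hsumN, hT0, hK₂, hN0]
  -- per-v bound on the sup
  haveI hne : Nonempty {r : α3 // r ≠ 0} := by
    refine ⟨⟨fun _ => 1, ?_⟩⟩
    intro h
    have := congrFun h 0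
    simp at this
  have hNr0 : 0 ≤ N ^ (-(1 : ℝ) / 2) := Real.rpow_nonneg hN0.le _
  have hmain : ∀ v : α3, v ≠ 0 →
      (⨆ r : {r : α3 // r ≠ 0},
          N ^ (-(1 : ℝ) / 2) *
            ∑' s : α3,
              if s ≠ 0 ∧ s ≠ -v then |W (r.1 - s)| * |η s| * |η (s + v)| else 0) ^ 2
        ≤ N⁻¹ * K₁ ^ 2 * (g v) ^ 2 := by
    intro v hv
    have hinnele : ∀ r : α3, ∀ s : α3,
        (if s ≠ 0 ∧ s ≠ -v then |W (r - s)| * |η s| * |η (s + v)| else 0)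
          ≤ K₁ * (if s ≠ 0 ∧ s ≠ -v then a s * a (s + v) else 0) := by
      intro r s
      by_cases hc : s ≠ 0 ∧ s ≠ -v
      · rw [if_pos hc, if_pos hc]
        have hsv0 : s + v ≠ 0 := fun h => hc.2 (eq_neg_of_add_eq_zero_left h)
        have h1 : a s = |η s| := by rw [ha_def]; dsimp only; rw [if_pos hc.1]
        have h2 : a (s + v) = |η (s + v)| := by rw [ha_def]; dsimp only; rw [if_pos hsv0]
        calc |W (r - s)| * |η s| * |η (s + v)| ≤ K₁ * |η s| * |η (s + v)| := by
              exact mul_le_mul_of_nonneg_right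
                (mul_le_mul_of_nonneg_right (hW _) (abs_nonneg _)) (abs_nonneg _)
          _ = K₁ * (a s * a (s + v)) := by rw [h1, h2]; ring
      · rw [if_neg hc, if_neg hc, mul_zero]
    have hinner0 : ∀ r : α3, ∀ s : α3,
        0 ≤ (if s ≠ 0 ∧ s ≠ -v then |W (r - s)| * |η s| * |η (s + v)| else 0) := by
      intro r s; split
      · positivity
      · exact le_rfl
    have hinnersum : ∀ r : α3,
        Summable (fun s : α3 => if s ≠ 0 ∧ s ≠ -v then |W (r - s)| * |η s| * |η (s + v)| else 0) :=
      fun r => Summable.of_nonneg_of_le (hinner0 r) (hinnele r) ((hts v).mul_left K₁)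
    have hinner : ∀ r : α3,
        (∑' s : α3, if s ≠ 0 ∧ s ≠ -v then |W (r - s)| * |η s| * |η (s + v)| else 0)
          ≤ K₁ * g v := by
      intro r
      calc (∑' s : α3, if s ≠ 0 ∧ s ≠ -v then |W (r - s)| * |η s| * |η (s + v)| else 0)
          ≤ ∑' s : α3, K₁ * (if s ≠ 0 ∧ s ≠ -v then a s * a (s + v) else 0) :=
            Summable.tsum_le_tsum (hinnele r) (hinnersum r) ((hts v).mul_left K₁)
        _ = K₁ * g v := by rw [tsum_mul_left]
    have hub : ∀ r : {r : α3 // r ≠ 0},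
        N ^ (-(1 : ℝ) / 2) *
            (∑' s : α3, if s ≠ 0 ∧ s ≠ -v then |W (r.1 - s)| * |η s| * |η (s + v)| else 0)
          ≤ N ^ (-(1 : ℝ) / 2) * (K₁ * g v) :=
      fun r => mul_le_mul_of_nonneg_left (hinner r.1) hNr0
    have hsup_le := ciSup_le hub
    have hbdd : BddAbove (Set.range fun r : {r : α3 // r ≠ 0} =>
        N ^ (-(1 : ℝ) / 2) *
          ∑' s : α3, if s ≠ 0 ∧ s ≠ -v then |W (r.1 - s)| * |η s| * |η (s + v)| else 0) := by
      refine ⟨N ^ (-(1 : ℝ) / 2) * (K₁ * g v), ?_⟩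
      rintro x ⟨r, rfl⟩
      exact hub r
    have hsup0 : 0 ≤ ⨆ r : {r : α3 // r ≠ 0},
        N ^ (-(1 : ℝ) / 2) *
          ∑' s : α3, if s ≠ 0 ∧ s ≠ -v then |W (r.1 - s)| * |η s| * |η (s + v)| else 0 := by
      refine le_ciSup_of_le hbdd (Classical.arbitrary _) ?_
      exact mul_nonneg hNr0 (tsum_nonneg (hinner0 _))
    have hsq : (N ^ (-(1 : ℝ) / 2)) ^ 2 = N⁻¹ := by
      rw [← Real.rpow_natCast (N ^ (-(1 : ℝ) / 2)) 2, ← Real.rpow_mul hN0.le]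
      norm_num
      exact Real.rpow_neg_one N
    calc (⨆ r : {r : α3 // r ≠ 0},
          N ^ (-(1 : ℝ) / 2) *
            ∑' s : α3, if s ≠ 0 ∧ s ≠ -v then |W (r.1 - s)| * |η s| * |η (s + v)| else 0) ^ 2
        ≤ (N ^ (-(1 : ℝ) / 2) * (K₁ * g v)) ^ 2 := pow_le_pow_left₀ hsup0 hsup_le 2
      _ = N⁻¹ * K₁ ^ 2 * (g v) ^ 2 := by rw [mul_pow, hsq]; ring
  -- the finitely supported piece
  set u : α3 → ℝ := fun v =>
    if v ≠ 0 ∧ ((M v : ℝ)) ≤ N then 416 ^ 2 * K₂ ^ 4 / ((M v : ℝ)) ^ 2 else 0 with hu_def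
  have hu0 : ∀ v, 0 ≤ u v := by
    intro v; rw [hu_def]; dsimp only; split
    · positivity
    · exact le_rfl
  have huB : ∀ F : Finset α3, ∑ k ∈ F, u k ≤ 416 ^ 2 * K₂ ^ 4 * (26 * N) := by
    intro F
    set F' := F.filter (fun k => k ≠ (0 : α3) ∧ ((M k : ℝ)) ≤ N) with hF'
    have hsub : ∑ k ∈ F, u k = ∑ k ∈ F', u k := by
      refine (Finset.sum_subset (Finset.filter_subset _ _) ?_).symm
      intro k hk hnk
      rw [hu_def]; dsimp only; rw [if_neg]
      intro hcond
      exact hnk (Finset.mem_filter.mpr ⟨hk, hcond⟩)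
    rw [hsub]
    have heach : ∀ k ∈ F', u k = (416 ^ 2 * K₂ ^ 4) * ((1 : ℝ) / ((M k : ℝ)) ^ 2) := by
      intro k hk
      obtain ⟨-, hcond⟩ := Finset.mem_filter.mp hk
      rw [hu_def]; dsimp only; rw [if_pos hcond]; ring
    rw [Finset.sum_congr rfl heach, ← Finset.mul_sum]
    have hsumF : ∑ k ∈ F', (1 : ℝ) / ((M k : ℝ)) ^ 2 ≤ 26 * N := by
      refine sum_ball_inv_sq_le N hN F' ?_
      intro k hk
      exact (Finset.mem_filter.mp hk).2
    exact mul_le_mul_of_nonneg_left hsumF (by positivity)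
  obtain ⟨husummable, hutsum⟩ := tsum_aux hu0 huB
  -- combine regimes
  have hgsq : ∀ v : α3, v ≠ 0 → (g v) ^ 2 ≤ u v + (416 * K₂ ^ 2 / N) * g v := by
    intro v hv
    have hM1 : (1 : ℝ) ≤ (M v : ℝ) := by exact_mod_cast one_le_M hv
    by_cases hvN : ((M v : ℝ)) ≤ N
    · have hueq : u v = 416 ^ 2 * K₂ ^ 4 / ((M v : ℝ)) ^ 2 := by
        rw [hu_def]; dsimp only; rw [if_pos ⟨hv, hvN⟩]
      have h1 : (g v) ^ 2 ≤ (416 * K₂ ^ 2 / ((M v : ℝ))) ^ 2 :=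
        pow_le_pow_left₀ (hg0 v) (hdecay v hv) 2
      have h3 : (416 * K₂ ^ 2 / ((M v : ℝ))) ^ 2 = 416 ^ 2 * K₂ ^ 4 / ((M v : ℝ)) ^ 2 := by
        rw [div_pow]; congr 1; ring
      have h4 : 0 ≤ (416 * K₂ ^ 2 / N) * g v := mul_nonneg (by positivity) (hg0 v)
      rw [hueq]
      linarith [h1, h3.le, h3.ge]
    · have hueq : u v = 0 := by
        rw [hu_def]; dsimp only; rw [if_neg (fun hcond => hvN hcond.2)]
      have hMv : N ≤ (M v : ℝ) := le_of_not_ge hvN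
      have h1 : g v ≤ 416 * K₂ ^ 2 / N :=
        le_trans (hdecay v hv) (div_le_div_of_nonneg_left (by positivity) hN0 hMv)
      have h2 : (g v) ^ 2 ≤ (416 * K₂ ^ 2 / N) * g v := by
        rw [pow_two]
        exact mul_le_mul_of_nonneg_right h1 (hg0 v)
      rw [hueq]
      linarith
  -- final majorant
  set Maj : α3 → ℝ := fun v => N⁻¹ * K₁ ^ 2 * (u v + (416 * K₂ ^ 2 / N) * P v) with hMaj_def
  have hMajsummable : Summable Maj :=
    ((husummable.add (hPsummable.mul_left _)).mul_left _)
  have hterm0 : ∀ v : α3, 0 ≤ (if v ≠ 0 then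
      (⨆ r : {r : α3 // r ≠ 0},
          N ^ (-(1 : ℝ) / 2) *
            ∑' s : α3,
              if s ≠ 0 ∧ s ≠ -v then |W (r.1 - s)| * |η s| * |η (s + v)| else 0) ^ 2
      else 0) := by
    intro v; split
    · exact sq_nonneg _
    · exact le_rfl
  have hterm_le : ∀ v : α3, (if v ≠ 0 then
      (⨆ r : {r : α3 // r ≠ 0},
          N ^ (-(1 : ℝ) / 2) *
            ∑' s : α3,
              if s ≠ 0 ∧ s ≠ -v then |W (r.1 - s)| * |η s| * |η (s + v)| else 0) ^ 2
      else 0) ≤ Maj v := by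
    intro v
    have hMaj0 : 0 ≤ N⁻¹ * K₁ ^ 2 * (u v + (416 * K₂ ^ 2 / N) * P v) := by
      have := hu0 v; have := hP0 v
      have h5 : 0 ≤ (416 * K₂ ^ 2 / N) * P v := mul_nonneg (by positivity) (hP0 v)
      positivity
    split
    · next hv =>
      refine le_trans (hmain v hv) ?_
      rw [hMaj_def]; dsimp only
      have hstep : (g v) ^ 2 ≤ u v + (416 * K₂ ^ 2 / N) * P v := by
        refine le_trans (hgsq v hv) ?_
        have : (416 * K₂ ^ 2 / N) * g v ≤ (416 * K₂ ^ 2 / N) * P v :=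
          mul_le_mul_of_nonneg_left (hgle v) (by positivity)
        linarith
      exact mul_le_mul_of_nonneg_left hstep (by positivity)
    · exact hMaj0
  have htermsummable : Summable (fun v : α3 => if v ≠ 0 then
      (⨆ r : {r : α3 // r ≠ 0},
          N ^ (-(1 : ℝ) / 2) *
            ∑' s : α3,
              if s ≠ 0 ∧ s ≠ -v then |W (r.1 - s)| * |η s| * |η (s + v)| else 0) ^ 2
      else 0) := Summable.of_nonneg_of_le hterm0 hterm_le hMajsummable
  have hfinal := Summable.tsum_le_tsum hterm_le htermsummable hMajsummable
  refine le_trans hfinal ?_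
  have hMajtsum : ∑' v, Maj v = N⁻¹ * K₁ ^ 2 * ((∑' v, u v) + (416 * K₂ ^ 2 / N) * (∑' v, P v)) := by
    rw [hMaj_def]
    rw [tsum_mul_left]
    congr 1
    rw [Summable.tsum_add husummable (hPsummable.mul_left _), tsum_mul_left]
  rw [hMajtsum]
  have hPsum' : (416 * K₂ ^ 2 / N) * (∑' v, P v) ≤ 416 * K₂ ^ 4 * N := by
    have h1 : (416 * K₂ ^ 2 / N) * (∑' v, P v) ≤ (416 * K₂ ^ 2 / N) * (K₂ ^ 2 * N ^ 2) :=
      mul_le_mul_of_nonneg_left hPsum (by positivity)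
    have h2 : (416 * K₂ ^ 2 / N) * (K₂ ^ 2 * N ^ 2) = 416 * K₂ ^ 4 * N := by
      field_simp
    linarith
  have hcomb : (∑' v, u v) + (416 * K₂ ^ 2 / N) * (∑' v, P v)
      ≤ 416 ^ 2 * K₂ ^ 4 * (26 * N) + 416 * K₂ ^ 4 * N := by
    linarith
  have hfin2 : N⁻¹ * K₁ ^ 2 * ((∑' v, u v) + (416 * K₂ ^ 2 / N) * (∑' v, P v))
      ≤ N⁻¹ * K₁ ^ 2 * (416 ^ 2 * K₂ ^ 4 * (26 * N) + 416 * K₂ ^ 4 * N) :=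
    mul_le_mul_of_nonneg_left hcomb (by positivity)
  refine le_trans hfin2 ?_
  have : N⁻¹ * K₁ ^ 2 * (416 ^ 2 * K₂ ^ 4 * (26 * N) + 416 * K₂ ^ 4 * N)
      = 4499872 * K₁ ^ 2 * K₂ ^ 4 := by
    field_simp
    ring
  rw [this]
end
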